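/- arXiv:1805.02414 — 4 statements merged into one kernel-verified Lean document; each statement's English description precedes it below -/
import Mathlib

section
/- For every integer k ≥ 0 and every point x ∈ ℝ³ with |x| = 1, the sum over l from −k to k of |u_{k,l}(x)|² equals (2k+1)/(4π). (Unsöld's theorem.) -/
open MeasureTheory Finset

noncomputable section

/-- The normalizing constant `C_{k,l} = √(((2k+1)/(4π)) · (k+l)! · (k−l)!)`. -/
def sphC (k : ℕ) (l : ℤ) : ℝ :=
  Real.sqrt ((2 * k + 1) / (4 * Real.pi) * ((k : ℤ) + l).toNat.factorial *
    ((k : ℤ) - l).toNat.factorial)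

/-- The solid spherical harmonic `u_{k,l}` on `ℝ³`, with `w = x + iy`:
`u_{k,l} = C_{k,l} Σ_{p+q+s=k, p−q=l} (1/(p!q!s!)) (−w/2)^p (w̄/2)^q z^s`. -/
def uSH (k : ℕ) (l : ℤ) (x : EuclideanSpace ℝ (Fin 3)) : ℂ :=
  (sphC k l : ℂ) *
    ∑ p ∈ Finset.range (k + 1), ∑ q ∈ Finset.range (k + 1),
      if (p : ℤ) - (q : ℤ) = l ∧ p + q ≤ k then
        (1 / ((p.factorial : ℂ) * (q.factorial : ℂ) * ((k - p - q).factorial : ℂ))) *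
          (-(((x 0 : ℂ) + Complex.I * (x 1 : ℂ)) / 2)) ^ p *
          ((((x 0 : ℂ) - Complex.I * (x 1 : ℂ))) / 2) ^ q *
          ((x 2 : ℂ)) ^ (k - p - q)
      else 0

namespace Unsold

def co (p q s : ℕ) : ℂ := 1 / ((p.factorial : ℂ) * (q.factorial : ℂ) * (s.factorial : ℂ))

def T (X Y Z : ℂ) (n : ℕ) (l : ℤ) (g : ℕ → ℕ → ℂ) : ℂ :=
  ∑ p ∈ Finset.range (n + 1), ∑ q ∈ Finset.range (n + 1),
    if (p : ℤ) - (q : ℤ) = l ∧ p + q ≤ n then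
      g p q * co p q (n - p - q) * X ^ p * Y ^ q * Z ^ (n - p - q)
    else 0

variable (X Y Z : ℂ)

lemma T_congr {n : ℕ} {l : ℤ} {g g' : ℕ → ℕ → ℂ}
    (h : ∀ p q : ℕ, (p : ℤ) - (q : ℤ) = l → p + q ≤ n → g p q = g' p q) :
    T X Y Z n l g = T X Y Z n l g' := by
  refine Finset.sum_congr rfl fun p _ => Finset.sum_congr rfl fun q _ => ?_
  split_ifs with hc
  · rw [h p q hc.1 hc.2]
  · rfl

lemma T_add {n : ℕ} {l : ℤ} (g g' : ℕ → ℕ → ℂ) :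
    T X Y Z n l g + T X Y Z n l g' = T X Y Z n l (fun p q => g p q + g' p q) := by
  rw [T, T, T, ← Finset.sum_add_distrib]
  refine Finset.sum_congr rfl fun p _ => ?_
  rw [← Finset.sum_add_distrib]
  refine Finset.sum_congr rfl fun q _ => ?_
  split_ifs with hc
  · ring
  · rw [add_zero]

lemma T_smul {n : ℕ} {l : ℤ} (c : ℂ) (g : ℕ → ℕ → ℂ) :
    c * T X Y Z n l g = T X Y Z n l (fun p q => c * g p q) := by
  rw [T, T, Finset.mul_sum]
  refine Finset.sum_congr rfl fun p _ => ?_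
  rw [Finset.mul_sum]
  refine Finset.sum_congr rfl fun q _ => ?_
  split_ifs with hc
  · ring
  · rw [mul_zero]

lemma co_succ_p (p q s : ℕ) : ((p : ℂ) + 1) * co (p + 1) q s = co p q s := by
  rw [co, co, Nat.factorial_succ]
  have h1 : (p.factorial : ℂ) ≠ 0 := Nat.cast_ne_zero.2 p.factorial_ne_zero
  have h2 : (q.factorial : ℂ) ≠ 0 := Nat.cast_ne_zero.2 q.factorial_ne_zero
  have h3 : (s.factorial : ℂ) ≠ 0 := Nat.cast_ne_zero.2 s.factorial_ne_zero
  have h4 : ((p : ℂ) + 1) ≠ 0 := by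
    intro h
    have := congrArg Complex.re h
    simp at this
    nlinarith [Nat.cast_nonneg (α := ℝ) p, this]
  push_cast
  field_simp

lemma M1 (n : ℕ) (l : ℤ) (g : ℕ → ℕ → ℂ) :
    X * T X Y Z n l g = T X Y Z (n + 1) (l + 1) (fun p q => (p : ℂ) * g (p - 1) q) := by
  rw [T_smul]
  rw [T, T]
  rw [Finset.sum_range_succ' (n := n + 1)]
  have h0 : ∑ q ∈ Finset.range (n + 1 + 1),
      (if ((0:ℕ) : ℤ) - (q : ℤ) = l + 1 ∧ 0 + q ≤ n + 1 then
        ((0:ℕ) : ℂ) * g (0 - 1) q * co 0 q (n + 1 - 0 - q) * X ^ (0:ℕ) * Y ^ q * Z ^ (n + 1 - 0 - q)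
      else 0) = 0 := by
    refine Finset.sum_eq_zero fun q _ => ?_
    split_ifs with hc
    · simp
    · rfl
  rw [h0, add_zero]
  refine Finset.sum_congr rfl fun p _ => ?_
  conv_rhs => rw [Finset.sum_range_succ]
  have h1 : (if ((p+1 : ℕ) : ℤ) - ((n+1 : ℕ) : ℤ) = l + 1 ∧ (p+1) + (n+1) ≤ n + 1 then
      ((p+1 : ℕ) : ℂ) * g (p + 1 - 1) (n+1) * co (p+1) (n+1) (n + 1 - (p+1) - (n+1)) * X ^ (p+1) * Y ^ (n+1) * Z ^ (n + 1 - (p+1) - (n+1))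
    else 0) = 0 := by
    rw [if_neg]
    rintro ⟨-, h⟩
    omega
  rw [h1, add_zero]
  refine Finset.sum_congr rfl fun q _ => ?_
  have hguard : (((p+1 : ℕ) : ℤ) - (q : ℤ) = l + 1 ∧ (p+1) + q ≤ n + 1) ↔ ((p : ℤ) - (q : ℤ) = l ∧ p + q ≤ n) := by
    constructor <;> (rintro ⟨h1, h2⟩; constructor; omega; omega)
  split_ifs with hc hc' hc'
  · have hs : n + 1 - (p + 1) - q = n - p - q := by omega
    have hp : p + 1 - 1 = p := by omega
    rw [hs, hp, pow_succ]
    have hco := co_succ_p p q (n - p - q)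
    have hcast : ((p + 1 : ℕ) : ℂ) = (p : ℂ) + 1 := by push_cast; ring
    rw [hcast]
    linear_combination (-(g p q * Y ^ q * Z ^ (n - p - q) * X ^ p * X)) * hco
  · exact absurd (hguard.mpr hc) hc'
  · exact absurd (hguard.mp hc') hc
  · rfl


lemma co_succ_q (p q s : ℕ) : ((q : ℂ) + 1) * co p (q + 1) s = co p q s := by
  rw [co, co, Nat.factorial_succ]
  have h1 : (p.factorial : ℂ) ≠ 0 := Nat.cast_ne_zero.2 p.factorial_ne_zero
  have h2 : (q.factorial : ℂ) ≠ 0 := Nat.cast_ne_zero.2 q.factorial_ne_zero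
  have h3 : (s.factorial : ℂ) ≠ 0 := Nat.cast_ne_zero.2 s.factorial_ne_zero
  have h4 : ((q : ℂ) + 1) ≠ 0 := by
    have : ((q : ℂ) + 1) = ((q + 1 : ℕ) : ℂ) := by push_cast; ring
    rw [this]
    exact Nat.cast_ne_zero.2 (Nat.succ_ne_zero q)
  push_cast
  field_simp

lemma co_succ_s (p q s : ℕ) : ((s : ℂ) + 1) * co p q (s + 1) = co p q s := by
  rw [co, co, Nat.factorial_succ]
  have h1 : (p.factorial : ℂ) ≠ 0 := Nat.cast_ne_zero.2 p.factorial_ne_zero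
  have h2 : (q.factorial : ℂ) ≠ 0 := Nat.cast_ne_zero.2 q.factorial_ne_zero
  have h3 : (s.factorial : ℂ) ≠ 0 := Nat.cast_ne_zero.2 s.factorial_ne_zero
  have h4 : ((s : ℂ) + 1) ≠ 0 := by
    have : ((s : ℂ) + 1) = ((s + 1 : ℕ) : ℂ) := by push_cast; ring
    rw [this]
    exact Nat.cast_ne_zero.2 (Nat.succ_ne_zero s)
  push_cast
  field_simp

lemma M2 (n : ℕ) (l : ℤ) (g : ℕ → ℕ → ℂ) :
    Y * T X Y Z n l g = T X Y Z (n + 1) (l - 1) (fun p q => (q : ℂ) * g p (q - 1)) := by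
  rw [T_smul]
  rw [T, T]
  conv_rhs => rw [Finset.sum_range_succ]
  have hrow : ∑ q ∈ Finset.range (n + 1 + 1),
      (if ((n+1 : ℕ) : ℤ) - (q : ℤ) = l - 1 ∧ (n+1) + q ≤ n + 1 then
        (q : ℂ) * g (n+1) (q - 1) * co (n+1) q (n + 1 - (n+1) - q) * X ^ (n+1) * Y ^ q * Z ^ (n + 1 - (n+1) - q)
      else 0) = 0 := by
    refine Finset.sum_eq_zero fun q _ => ?_
    split_ifs with hc
    · have : q = 0 := by omega
      subst this
      simp
    · rfl
  rw [hrow, add_zero]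
  refine Finset.sum_congr rfl fun p hp => ?_
  conv_rhs => rw [Finset.sum_range_succ' (n := n + 1)]
  have h0 : (if ((p : ℕ) : ℤ) - ((0:ℕ) : ℤ) = l - 1 ∧ p + 0 ≤ n + 1 then
      ((0:ℕ) : ℂ) * g p (0 - 1) * co p 0 (n + 1 - p - 0) * X ^ p * Y ^ (0:ℕ) * Z ^ (n + 1 - p - 0)
    else 0) = 0 := by
    split_ifs with hc
    · simp
    · rfl
  rw [h0, add_zero]
  refine Finset.sum_congr rfl fun q _ => ?_
  have hguard : (((p : ℕ) : ℤ) - ((q+1 : ℕ) : ℤ) = l - 1 ∧ p + (q+1) ≤ n + 1) ↔ ((p : ℤ) - (q : ℤ) = l ∧ p + q ≤ n) := by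
    constructor <;> (rintro ⟨h1, h2⟩; constructor; omega; omega)
  split_ifs with hc hc' hc'
  · have hs : n + 1 - p - (q + 1) = n - p - q := by
      have := Finset.mem_range.1 hp
      omega
    have hq : q + 1 - 1 = q := by omega
    rw [hs, hq, pow_succ]
    have hco := co_succ_q p q (n - p - q)
    have hcast : ((q + 1 : ℕ) : ℂ) = (q : ℂ) + 1 := by push_cast; ring
    rw [hcast]
    linear_combination (-(g p q * X ^ p * Z ^ (n - p - q) * Y ^ q * Y)) * hco
  · exact absurd (hguard.mpr hc) hc'
  · exact absurd (hguard.mp hc') hc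
  · rfl

lemma M3 (n : ℕ) (l : ℤ) (g : ℕ → ℕ → ℂ) :
    Z * T X Y Z n l g = T X Y Z (n + 1) l (fun p q => ((n + 1 - p - q : ℕ) : ℂ) * g p q) := by
  rw [T_smul]
  rw [T, T]
  conv_rhs => rw [Finset.sum_range_succ]
  have hrow : ∑ q ∈ Finset.range (n + 1 + 1),
      (if ((n+1 : ℕ) : ℤ) - (q : ℤ) = l ∧ (n+1) + q ≤ n + 1 then
        ((n + 1 - (n+1) - q : ℕ) : ℂ) * g (n+1) q * co (n+1) q (n + 1 - (n+1) - q) * X ^ (n+1) * Y ^ q * Z ^ (n + 1 - (n+1) - q)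
      else 0) = 0 := by
    refine Finset.sum_eq_zero fun q _ => ?_
    split_ifs with hc
    · have h5 : n + 1 - (n+1) - q = 0 := by omega
      rw [h5]
      simp
    · rfl
  rw [hrow, add_zero]
  refine Finset.sum_congr rfl fun p hp => ?_
  conv_rhs => rw [Finset.sum_range_succ]
  have hlast : (if ((p : ℕ) : ℤ) - ((n+1 : ℕ) : ℤ) = l ∧ p + (n+1) ≤ n + 1 then
      ((n + 1 - p - (n+1) : ℕ) : ℂ) * g p (n+1) * co p (n+1) (n + 1 - p - (n+1)) * X ^ p * Y ^ (n+1) * Z ^ (n + 1 - p - (n+1))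
    else 0) = 0 := by
    split_ifs with hc
    · have h5 : n + 1 - p - (n+1) = 0 := by omega
      rw [h5]
      simp
    · rfl
  rw [hlast, add_zero]
  refine Finset.sum_congr rfl fun q _ => ?_
  split_ifs with hc hc' hc'
  · have hs : n + 1 - p - q = (n - p - q) + 1 := by omega
    rw [hs, pow_succ]
    have hco := co_succ_s p q (n - p - q)
    have hcast : (((n - p - q) + 1 : ℕ) : ℂ) = ((n - p - q : ℕ) : ℂ) + 1 := by push_cast; ring
    rw [hcast]
    linear_combination (-(g p q * X ^ p * Y ^ q * Z ^ (n - p - q) * Z)) * hco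
  · exfalso
    rcases hc with ⟨h1, h2⟩
    exact hc' ⟨h1, by omega⟩
  · -- old guard false, new guard true: coefficient is zero
    rcases hc' with ⟨h1, h2⟩
    have h3 : p + q = n + 1 := by
      by_contra h
      exact hc ⟨h1, by omega⟩
    have h5 : n + 1 - p - q = 0 := by omega
    rw [h5]
    simp
  · rfl


def A (X Y Z : ℂ) (n : ℕ) (l : ℤ) : ℂ := T X Y Z n l (fun _ _ => 1)

lemma recA (n : ℕ) (l : ℤ) :
    ((n : ℂ) + 1) * A X Y Z (n + 1) l
      = X * A X Y Z n (l - 1) + Y * A X Y Z n (l + 1) + Z * A X Y Z n l := by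
  rw [A, A, A, A, T_smul, M1, M2, M3]
  have hl1 : l - 1 + 1 = l := by ring
  have hl2 : l + 1 - 1 = l := by ring
  rw [hl1, hl2, T_add, T_add]
  refine T_congr X Y Z fun p q hpq hle => ?_
  have hnat : p + q + (n + 1 - p - q) = n + 1 := by omega
  have hcast : (p : ℂ) + q + ((n + 1 - p - q : ℕ) : ℂ) = (n : ℂ) + 1 := by
    have h := congrArg (fun t : ℕ => (t : ℂ)) hnat
    push_cast at h
    linear_combination h
  simp only [mul_one]
  linear_combination -hcast

lemma cast_mul_pred (s : ℕ) : (s : ℂ) * ((s - 1 : ℕ) : ℂ) = (s : ℂ) ^ 2 - (s : ℂ) := by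
  cases s with
  | zero => simp
  | succ t => push_cast [Nat.succ_sub_one]; ring

lemma keyA (n : ℕ) (m : ℤ) :
    Z * ((((n:ℂ) + 1 + m) * ((n:ℂ) + 1 - m)) * A X Y Z (n + 1) m)
      - Y * ((((n:ℂ) + 2 + m) * ((n:ℂ) + 1 + m)) * A X Y Z (n + 1) (m + 1))
      - X * ((((n:ℂ) + 2 - m) * ((n:ℂ) + 1 - m)) * A X Y Z (n + 1) (m - 1))
    = ((n:ℂ) + 1) * (Z * (Z * A X Y Z n m)) - (4 * ((n:ℂ) + 1)) * (X * (Y * A X Y Z n m)) := by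
  have hm1 : m + 1 - 1 = m := by ring
  have hm2 : m - 1 + 1 = m := by ring
  have hy : Y * A X Y Z (n+1) (m+1) = T X Y Z (n+1+1) m (fun p q => (q : ℂ) * 1) := by
    rw [A, M2, hm1]
  have hx : X * A X Y Z (n+1) (m-1) = T X Y Z (n+1+1) m (fun p q => (p : ℂ) * 1) := by
    rw [A, M1, hm2]
  have hz : Z * A X Y Z (n+1) m = T X Y Z (n+1+1) m
      (fun p q => ((n + 1 + 1 - p - q : ℕ) : ℂ) * 1) := by
    rw [A, M3]
  have hzz : Z * (Z * A X Y Z n m) = T X Y Z (n+1+1) m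
      (fun p q => ((n + 1 + 1 - p - q : ℕ) : ℂ) * (((n + 1 - p - q : ℕ) : ℂ) * 1)) := by
    rw [A, M3, M3]
  have hxy : X * (Y * A X Y Z n m) = T X Y Z (n+1+1) m
      (fun p q => (p : ℂ) * ((q : ℂ) * 1)) := by
    rw [A, M2, M1, hm2]
  have hL : (((n:ℂ) + 1 + m) * ((n:ℂ) + 1 - m)) * (Z * A X Y Z (n + 1) m)
        + ((-(((n:ℂ) + 2 + m) * ((n:ℂ) + 1 + m))) * (Y * A X Y Z (n + 1) (m + 1))
        + ((-(((n:ℂ) + 2 - m) * ((n:ℂ) + 1 - m))) * (X * A X Y Z (n + 1) (m - 1))))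
      = T X Y Z (n+1+1) m (fun p q =>
          (((n:ℂ) + 1 + m) * ((n:ℂ) + 1 - m)) * (((n + 1 + 1 - p - q : ℕ) : ℂ) * 1)
          + ((-(((n:ℂ) + 2 + m) * ((n:ℂ) + 1 + m))) * ((q : ℂ) * 1)
          + (-(((n:ℂ) + 2 - m) * ((n:ℂ) + 1 - m))) * ((p : ℂ) * 1))) := by
    rw [hz, hy, hx, T_smul, T_smul, T_smul, T_add, T_add]
  have hR : (((n:ℂ) + 1) * (Z * (Z * A X Y Z n m)))
        + ((-(4 * ((n:ℂ) + 1))) * (X * (Y * A X Y Z n m)))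
      = T X Y Z (n+1+1) m (fun p q =>
          ((n:ℂ) + 1) * (((n + 1 + 1 - p - q : ℕ) : ℂ) * (((n + 1 - p - q : ℕ) : ℂ) * 1))
          + (-(4 * ((n:ℂ) + 1))) * ((p : ℂ) * ((q : ℂ) * 1))) := by
    rw [hzz, hxy, T_smul, T_smul, T_add]
  have hmid : T X Y Z (n+1+1) m (fun p q =>
          (((n:ℂ) + 1 + m) * ((n:ℂ) + 1 - m)) * (((n + 1 + 1 - p - q : ℕ) : ℂ) * 1)
          + ((-(((n:ℂ) + 2 + m) * ((n:ℂ) + 1 + m))) * ((q : ℂ) * 1)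
          + (-(((n:ℂ) + 2 - m) * ((n:ℂ) + 1 - m))) * ((p : ℂ) * 1)))
      = T X Y Z (n+1+1) m (fun p q =>
          ((n:ℂ) + 1) * (((n + 1 + 1 - p - q : ℕ) : ℂ) * (((n + 1 - p - q : ℕ) : ℂ) * 1))
          + (-(4 * ((n:ℂ) + 1))) * ((p : ℂ) * ((q : ℂ) * 1))) := by
    refine T_congr X Y Z fun p q hpq hle => ?_
    have hm : ((m : ℤ) : ℂ) = (p : ℂ) - (q : ℂ) := by
      have := congrArg (fun t : ℤ => (t : ℂ)) hpq
      push_cast at this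
      linear_combination - this
    have e3 : n + 1 - p - q = (n + 1 + 1 - p - q) - 1 := by omega
    have hmp := cast_mul_pred (n + 1 + 1 - p - q)
    have hs2 : ((n + 1 + 1 - p - q : ℕ) : ℂ) = (n : ℂ) + 2 - p - q := by
      have h' : p + q + (n + 1 + 1 - p - q) = n + 2 := by omega
      have h := congrArg (fun t : ℕ => (t : ℂ)) h'
      push_cast at h
      linear_combination h
    simp only [mul_one]
    rw [hm, e3, hs2]
    rw [hs2] at hmp
    linear_combination (-((n:ℂ) + 1)) * hmp
  calc Z * ((((n:ℂ) + 1 + m) * ((n:ℂ) + 1 - m)) * A X Y Z (n + 1) m)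
      - Y * ((((n:ℂ) + 2 + m) * ((n:ℂ) + 1 + m)) * A X Y Z (n + 1) (m + 1))
      - X * ((((n:ℂ) + 2 - m) * ((n:ℂ) + 1 - m)) * A X Y Z (n + 1) (m - 1))
      = (((n:ℂ) + 1 + m) * ((n:ℂ) + 1 - m)) * (Z * A X Y Z (n + 1) m)
        + ((-(((n:ℂ) + 2 + m) * ((n:ℂ) + 1 + m))) * (Y * A X Y Z (n + 1) (m + 1))
        + ((-(((n:ℂ) + 2 - m) * ((n:ℂ) + 1 - m))) * (X * A X Y Z (n + 1) (m - 1)))) := by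
        ring
    _ = (((n:ℂ) + 1) * (Z * (Z * A X Y Z n m)))
        + ((-(4 * ((n:ℂ) + 1))) * (X * (Y * A X Y Z n m))) := by rw [hL, hmid, ← hR]
    _ = ((n:ℂ) + 1) * (Z * (Z * A X Y Z n m)) - (4 * ((n:ℂ) + 1)) * (X * (Y * A X Y Z n m)) := by
        ring

lemma A_zero {n : ℕ} {l : ℤ} (h : l ∉ Finset.Icc (-(n:ℤ)) (n:ℤ)) : A X Y Z n l = 0 := by
  rw [Finset.mem_Icc] at h
  push_neg at h
  rw [A, T]
  refine Finset.sum_eq_zero fun p _ => Finset.sum_eq_zero fun q _ => ?_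
  rw [if_neg]
  rintro ⟨h1, h2⟩
  rcases le_or_gt (-(n:ℤ)) l with h3 | h3
  · have := h h3
    omega
  · omega

lemma sum_shift (G : ℤ → ℂ) (a b c : ℤ) :
    ∑ m ∈ Finset.Icc (a + c) (b + c), G m = ∑ l ∈ Finset.Icc a b, G (l + c) := by
  rw [← Finset.map_add_right_Icc a b c, Finset.sum_map]
  simp

def Sw (X Y Z : ℂ) (n : ℕ) : ℂ :=
  ∑ l ∈ Finset.Icc (-(n:ℤ)) (n:ℤ),
    (((n:ℤ) + l).toNat.factorial : ℂ) * (((n:ℤ) - l).toNat.factorial : ℂ)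
      * (A X Y Z n l * (starRingEnd ℂ) (A X Y Z n l))

lemma Srec (hX : (starRingEnd ℂ) X = -Y) (hZ : (starRingEnd ℂ) Z = Z) (n : ℕ) :
    Sw X Y Z (n + 1) = (Z ^ 2 - 4 * X * Y) * Sw X Y Z n := by
  have hY : (starRingEnd ℂ) Y = -X := by
    have h := congrArg (starRingEnd ℂ) hX
    simp only [Complex.conj_conj, map_neg] at h
    linear_combination h
  have hne : ((n : ℂ) + 1) ≠ 0 := by
    have : ((n : ℂ) + 1) = ((n + 1 : ℕ) : ℂ) := by push_cast; ring
    rw [this]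
    exact Nat.cast_ne_zero.2 (Nat.succ_ne_zero n)
  apply mul_left_cancel₀ hne
  -- conjugated recursion
  have hconj : ∀ l : ℤ, ((n : ℂ) + 1) * (starRingEnd ℂ) (A X Y Z (n+1) l)
      = -Y * (starRingEnd ℂ) (A X Y Z n (l-1)) + -X * (starRingEnd ℂ) (A X Y Z n (l+1))
        + Z * (starRingEnd ℂ) (A X Y Z n l) := by
    intro l
    have h := congrArg (starRingEnd ℂ) (recA X Y Z n l)
    simp only [map_mul, map_add, map_one, map_natCast] at h
    rw [hX, hY, hZ] at h
    linear_combination h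
  set C : ℤ → ℂ := fun m => (starRingEnd ℂ) (A X Y Z n m) with hC
  set N : ℕ := n + 1 with hN
  -- three families
  set G1 : ℤ → ℂ := fun m =>
    (((N:ℤ) + (m+1)).toNat.factorial : ℂ) * (((N:ℤ) - (m+1)).toNat.factorial : ℂ)
      * (A X Y Z N (m+1) * (-Y * C m)) with hG1
  set G2 : ℤ → ℂ := fun m =>
    (((N:ℤ) + (m-1)).toNat.factorial : ℂ) * (((N:ℤ) - (m-1)).toNat.factorial : ℂ)
      * (A X Y Z N (m-1) * (-X * C m)) with hG2
  set G3 : ℤ → ℂ := fun m =>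
    (((N:ℤ) + m).toNat.factorial : ℂ) * (((N:ℤ) - m).toNat.factorial : ℂ)
      * (A X Y Z N m * (Z * C m)) with hG3
  have step1 : ((n : ℂ) + 1) * Sw X Y Z N
      = ∑ l ∈ Finset.Icc (-(N:ℤ)) (N:ℤ), (G1 (l - 1) + G2 (l + 1) + G3 l) := by
    rw [Sw, Finset.mul_sum]
    refine Finset.sum_congr rfl fun l _ => ?_
    have h1 : G1 (l - 1) = (((N:ℤ) + l).toNat.factorial : ℂ) * (((N:ℤ) - l).toNat.factorial : ℂ)
        * (A X Y Z N l * (-Y * C (l - 1))) := by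
      rw [hG1]
      norm_num
    have h2 : G2 (l + 1) = (((N:ℤ) + l).toNat.factorial : ℂ) * (((N:ℤ) - l).toNat.factorial : ℂ)
        * (A X Y Z N l * (-X * C (l + 1))) := by
      rw [hG2]
      norm_num
    rw [h1, h2, hG3]
    have hc := hconj l
    have hNl : ((N : ℕ) : ℂ) = (n : ℂ) + 1 := by rw [hN]; push_cast; ring
    calc ((n:ℂ) + 1) * ((((N:ℤ) + l).toNat.factorial : ℂ) * (((N:ℤ) - l).toNat.factorial : ℂ)
          * (A X Y Z N l * (starRingEnd ℂ) (A X Y Z N l)))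
        = (((N:ℤ) + l).toNat.factorial : ℂ) * (((N:ℤ) - l).toNat.factorial : ℂ)
          * (A X Y Z N l * (((n:ℂ) + 1) * (starRingEnd ℂ) (A X Y Z N l))) := by ring
      _ = _ := by
          rw [hconj l]
          simp only [hC]
          ring
  have hGz : ∀ m : ℤ, m ∉ Finset.Icc (-(n:ℤ)) (n:ℤ) → C m = 0 := by
    intro m hm
    simp only [hC]
    rw [A_zero X Y Z hm, map_zero]
  have s1' : ∑ l ∈ Finset.Icc (-(N:ℤ)) (N:ℤ), G1 (l - 1)
      = ∑ m ∈ Finset.Icc (-(n:ℤ)) (n:ℤ), G1 m := by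
    have h1 : ∑ l ∈ Finset.Icc (-(N:ℤ)) (N:ℤ), G1 (l - 1)
        = ∑ m ∈ Finset.Icc (-(N:ℤ) + -1) ((N:ℤ) + -1), G1 m := by
      rw [sum_shift]
      refine Finset.sum_congr rfl fun l _ => ?_
      norm_num [sub_eq_add_neg]
    rw [h1]
    refine (Finset.sum_subset ?_ ?_).symm
    · intro m hm
      rw [Finset.mem_Icc] at hm ⊢
      rw [hN] at *
      omega
    · intro m _ hm
      simp only [hG1]
      rw [hGz m hm]
      ring
  have s2' : ∑ l ∈ Finset.Icc (-(N:ℤ)) (N:ℤ), G2 (l + 1)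
      = ∑ m ∈ Finset.Icc (-(n:ℤ)) (n:ℤ), G2 m := by
    have h1 : ∑ l ∈ Finset.Icc (-(N:ℤ)) (N:ℤ), G2 (l + 1)
        = ∑ m ∈ Finset.Icc (-(N:ℤ) + 1) ((N:ℤ) + 1), G2 m := by
      rw [sum_shift]
    rw [h1]
    refine (Finset.sum_subset ?_ ?_).symm
    · intro m hm
      rw [Finset.mem_Icc] at hm ⊢
      rw [hN] at *
      omega
    · intro m _ hm
      simp only [hG2]
      rw [hGz m hm]
      ring
  have s3' : ∑ l ∈ Finset.Icc (-(N:ℤ)) (N:ℤ), G3 l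
      = ∑ m ∈ Finset.Icc (-(n:ℤ)) (n:ℤ), G3 m := by
    refine (Finset.sum_subset ?_ ?_).symm
    · intro m hm
      rw [Finset.mem_Icc] at hm ⊢
      rw [hN] at *
      omega
    · intro m _ hm
      simp only [hG3]
      rw [hGz m hm]
      ring
  have final : ∑ m ∈ Finset.Icc (-(n:ℤ)) (n:ℤ), (G1 m + G2 m + G3 m)
      = ((n:ℂ) + 1) * ((Z ^ 2 - 4 * X * Y) * Sw X Y Z n) := by
    rw [Sw, Finset.mul_sum, Finset.mul_sum]
    refine Finset.sum_congr rfl fun m hm => ?_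
    rw [Finset.mem_Icc] at hm
    simp only [hG1, hG2, hG3, hC]
    rw [hN]
    have hNZ : (((n+1 : ℕ) : ℤ)) = (n : ℤ) + 1 := by push_cast; ring
    set a := ((n:ℤ) + m).toNat with ha
    set b := ((n:ℤ) - m).toNat with hb
    have ea1 : (((n+1 : ℕ) : ℤ) + (m+1)).toNat = a + 1 + 1 := by omega
    have eb1 : (((n+1 : ℕ) : ℤ) - (m+1)).toNat = b := by omega
    have ea2 : (((n+1 : ℕ) : ℤ) + (m-1)).toNat = a := by omega
    have eb2 : (((n+1 : ℕ) : ℤ) - (m-1)).toNat = b + 1 + 1 := by omega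
    have ea3 : (((n+1 : ℕ) : ℤ) + m).toNat = a + 1 := by omega
    have eb3 : (((n+1 : ℕ) : ℤ) - m).toNat = b + 1 := by omega
    rw [ea1, eb1, ea2, eb2, ea3, eb3]
    rw [Nat.factorial_succ (a+1), Nat.factorial_succ a, Nat.factorial_succ (b+1),
      Nat.factorial_succ b]
    have hca : ((a : ℕ) : ℂ) = (n : ℂ) + (m : ℂ) := by
      have h1 : ((a : ℕ) : ℤ) = (n : ℤ) + m := by omega
      have h2 := congrArg (fun t : ℤ => (t : ℂ)) h1
      push_cast at h2
      linear_combination h2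
    have hcb : ((b : ℕ) : ℂ) = (n : ℂ) - (m : ℂ) := by
      have h1 : ((b : ℕ) : ℤ) = (n : ℤ) - m := by omega
      have h2 := congrArg (fun t : ℤ => (t : ℂ)) h1
      push_cast at h2
      linear_combination h2
    push_cast
    rw [hca, hcb]
    linear_combination ((a.factorial : ℂ) * (b.factorial : ℂ)
      * (starRingEnd ℂ) (A X Y Z n m)) * keyA X Y Z n m
  calc ((n:ℂ) + 1) * Sw X Y Z N
      = ∑ l ∈ Finset.Icc (-(N:ℤ)) (N:ℤ), (G1 (l - 1) + G2 (l + 1) + G3 l) := step1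
    _ = (∑ l ∈ Finset.Icc (-(N:ℤ)) (N:ℤ), G1 (l - 1))
        + (∑ l ∈ Finset.Icc (-(N:ℤ)) (N:ℤ), G2 (l + 1))
        + (∑ l ∈ Finset.Icc (-(N:ℤ)) (N:ℤ), G3 l) := by
        rw [Finset.sum_add_distrib, Finset.sum_add_distrib]
    _ = (∑ m ∈ Finset.Icc (-(n:ℤ)) (n:ℤ), G1 m)
        + (∑ m ∈ Finset.Icc (-(n:ℤ)) (n:ℤ), G2 m)
        + (∑ m ∈ Finset.Icc (-(n:ℤ)) (n:ℤ), G3 m) := by rw [s1', s2', s3']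
    _ = ∑ m ∈ Finset.Icc (-(n:ℤ)) (n:ℤ), (G1 m + G2 m + G3 m) := by
        rw [← Finset.sum_add_distrib, ← Finset.sum_add_distrib]
    _ = ((n:ℂ) + 1) * ((Z ^ 2 - 4 * X * Y) * Sw X Y Z n) := final

lemma Sw_zero : Sw X Y Z 0 = 1 := by
  rw [Sw]
  norm_num
  rw [A, T]
  simp [co]

lemma Sw_pow (hX : (starRingEnd ℂ) X = -Y) (hZ : (starRingEnd ℂ) Z = Z) (k : ℕ) :
    Sw X Y Z k = (Z ^ 2 - 4 * X * Y) ^ k := by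
  induction k with
  | zero => rw [Sw_zero, pow_zero]
  | succ n ih => rw [Srec X Y Z hX hZ n, ih, pow_succ]; ring

lemma real_sum (hX : (starRingEnd ℂ) X = -Y) (hZ : (starRingEnd ℂ) Z = Z)
    (hs : Z ^ 2 - 4 * X * Y = 1) (k : ℕ) :
    ∑ l ∈ Finset.Icc (-(k:ℤ)) (k:ℤ),
      ((((k:ℤ) + l).toNat.factorial : ℝ) * (((k:ℤ) - l).toNat.factorial : ℝ))
        * ‖A X Y Z k l‖ ^ 2 = 1 := by
  have h1 : Sw X Y Z k = 1 := by rw [Sw_pow X Y Z hX hZ, hs, one_pow]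
  rw [Sw] at h1
  have h2 : ∀ l : ℤ,
      (((k:ℤ) + l).toNat.factorial : ℂ) * (((k:ℤ) - l).toNat.factorial : ℂ)
        * (A X Y Z k l * (starRingEnd ℂ) (A X Y Z k l))
      = (((((k:ℤ) + l).toNat.factorial : ℝ) * (((k:ℤ) - l).toNat.factorial : ℝ)
        * ‖A X Y Z k l‖ ^ 2 : ℝ) : ℂ) := by
    intro l
    rw [Complex.mul_conj, ← Complex.sq_norm]
    push_cast
    ring
  rw [Finset.sum_congr rfl (fun l _ => h2 l)] at h1
  rw [← Complex.ofReal_sum] at h1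
  exact_mod_cast h1

end Unsold

open Unsold in
/-- Unsöld's theorem: `Σ_{l=−k}^{k} |u_{k,l}(x)|² = (2k+1)/(4π)` on the unit sphere. -/
theorem unsold (k : ℕ) (x : EuclideanSpace ℝ (Fin 3)) (hx : ‖x‖ = 1) :
    ∑ l ∈ Finset.Icc (-(k : ℤ)) (k : ℤ), ‖uSH k l x‖ ^ 2
      = (2 * (k : ℝ) + 1) / (4 * Real.pi) := by
  set X : ℂ := -(((x 0 : ℂ) + Complex.I * (x 1 : ℂ)) / 2) with hXd
  set Y : ℂ := (((x 0 : ℂ) - Complex.I * (x 1 : ℂ))) / 2 with hYd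
  set Z : ℂ := ((x 2 : ℂ)) with hZd
  have hX : (starRingEnd ℂ) X = -Y := by
    rw [hXd, hYd]
    simp only [map_neg, map_div₀, map_add, map_sub, map_mul, Complex.conj_ofReal,
      Complex.conj_I, map_ofNat]
    ring
  have hZ : (starRingEnd ℂ) Z = Z := by
    rw [hZd]
    simp [Complex.conj_ofReal]
  have hnorm : (x 0 : ℝ) ^ 2 + (x 1 : ℝ) ^ 2 + (x 2 : ℝ) ^ 2 = 1 := by
    have h1 := EuclideanSpace.norm_eq x
    rw [hx] at h1
    have h2 : ∑ i, ‖x i‖ ^ 2 = 1 := by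
      have h3 : (0:ℝ) ≤ ∑ i, ‖x i‖ ^ 2 := by positivity
      nlinarith [Real.sq_sqrt h3]
    rw [Fin.sum_univ_three] at h2
    simpa [sq_abs] using h2
  have hs : Z ^ 2 - 4 * X * Y = 1 := by
    rw [hXd, hYd, hZd]
    have : ((x 0 : ℂ))^2 + ((x 1 : ℂ))^2 + ((x 2 : ℂ))^2 = 1 := by
      have := congrArg (fun t : ℝ => (t : ℂ)) hnorm
      push_cast at this
      exact this
    linear_combination this - ((x 1 : ℂ))^2 * Complex.I_sq
  have hu : ∀ l : ℤ, uSH k l x = (sphC k l : ℂ) * A X Y Z k l := by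
    intro l
    rw [uSH, A, T]
    congr 1
    refine Finset.sum_congr rfl fun p _ => Finset.sum_congr rfl fun q _ => ?_
    split_ifs with hc
    · rw [co]
      ring
    · rfl
  have hCsq : ∀ l ∈ Finset.Icc (-(k:ℤ)) (k:ℤ), (sphC k l) ^ 2
      = (2 * (k:ℝ) + 1) / (4 * Real.pi)
        * ((((k:ℤ) + l).toNat.factorial : ℝ) * (((k:ℤ) - l).toNat.factorial : ℝ)) := by
    intro l _
    rw [sphC, Real.sq_sqrt]
    · ring
    · have hpi := Real.pi_pos
      positivity
  have hsum := real_sum X Y Z hX hZ hs k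
  calc ∑ l ∈ Finset.Icc (-(k : ℤ)) (k : ℤ), ‖uSH k l x‖ ^ 2
      = ∑ l ∈ Finset.Icc (-(k : ℤ)) (k : ℤ), (2 * (k:ℝ) + 1) / (4 * Real.pi)
          * (((((k:ℤ) + l).toNat.factorial : ℝ) * (((k:ℤ) - l).toNat.factorial : ℝ))
            * ‖A X Y Z k l‖ ^ 2) := by
        refine Finset.sum_congr rfl fun l hl => ?_
        rw [hu l, norm_mul, mul_pow, Complex.norm_real, Real.norm_eq_abs, sq_abs, hCsq l hl]
        ring
    _ = (2 * (k:ℝ) + 1) / (4 * Real.pi) := by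
        rw [← Finset.mul_sum, hsum, mul_one]
end
end

section
/- Let k ≥ 1 be an integer. For every integer l with −k+2 ≤ l ≤ k, the Wirtinger derivative ∂u_{k,l}/∂w := (1/2)(∂_x − i ∂_y)u_{k,l} satisfies ∂u_{k,l}/∂w = −( √((k+l−1)(k+l)(2k+1)) / (2√(2k−1)) ) · u_{k−1, l−1} identically on ℝ³. Moreover, for l ∈ {−k, −k+1} one has ∂u_{k,l}/∂w ≡ 0. -/
open MeasureTheory Finset

noncomputable section

/-- The partial derivative `∂u/∂xᵢ` of a function `u : ℝ³ → ℂ`. -/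
def pd (i : Fin 3) (u : EuclideanSpace ℝ (Fin 3) → ℂ) (x : EuclideanSpace ℝ (Fin 3)) : ℂ :=
  fderiv ℝ u x (EuclideanSpace.single i (1 : ℝ))

/-- `|∇u(x)|² = |∂_x u(x)|² + |∂_y u(x)|² + |∂_z u(x)|²`. -/
def gradSq (u : EuclideanSpace ℝ (Fin 3) → ℂ) (x : EuclideanSpace ℝ (Fin 3)) : ℝ :=
  ‖pd 0 u x‖ ^ 2 + ‖pd 1 u x‖ ^ 2 + ‖pd 2 u x‖ ^ 2

/-- The Wirtinger derivative `∂u/∂w = (1/2)(∂_x − i ∂_y)u`. -/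
def dW (u : EuclideanSpace ℝ (Fin 3) → ℂ) (x : EuclideanSpace ℝ (Fin 3)) : ℂ :=
  (1 / 2) * (pd 0 u x - Complex.I * pd 1 u x)

/-- The Wirtinger derivative `∂u/∂w̄ = (1/2)(∂_x + i ∂_y)u`. -/
def dWbar (u : EuclideanSpace ℝ (Fin 3) → ℂ) (x : EuclideanSpace ℝ (Fin 3)) : ℂ :=
  (1 / 2) * (pd 0 u x + Complex.I * pd 1 u x)

theorem termHD (c W0 Wb0 Zc α β : ℂ) (p q s : ℕ) :
  HasDerivAt (fun t : ℝ => c * (-((W0 + (t:ℂ)*α)/2))^p * ((Wb0 + (t:ℂ)*β)/2)^q * Zc^s)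
    (c * ((p:ℂ) * (-(W0/2))^(p-1) * (-(α/2)) * (Wb0/2)^q
        + (q:ℂ) * (-(W0/2))^p * (Wb0/2)^(q-1) * (β/2)) * Zc^s) 0 := by
  have hA : HasDerivAt (fun w : ℂ => -((W0 + w*α)/2)) (-(α/2)) 0 := by
    simpa using ((((hasDerivAt_id (0:ℂ)).mul_const α).const_add W0).div_const 2).fun_neg
  have hB : HasDerivAt (fun w : ℂ => (Wb0 + w*β)/2) (β/2) 0 := by
    simpa using (((hasDerivAt_id (0:ℂ)).mul_const β).const_add Wb0).div_const 2
  have h := ((((hA.fun_pow p).const_mul c).fun_mul (hB.fun_pow q)).mul_const (Zc^s)).comp_ofReal (z := 0)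
  simp only [Complex.ofReal_zero, zero_mul, add_zero] at h
  convert h using 1
  ring

theorem pd_line {u : EuclideanSpace ℝ (Fin 3) → ℂ} {x : EuclideanSpace ℝ (Fin 3)}
    (hu : DifferentiableAt ℝ u x) (i : Fin 3) {d : ℂ}
    (h : HasDerivAt (fun t : ℝ => u (x + t • EuclideanSpace.single i (1:ℝ))) d 0) :
    pd i u x = d := by
  have hγ : HasDerivAt (fun t : ℝ => x + t • EuclideanSpace.single i (1:ℝ))
      (EuclideanSpace.single i (1:ℝ)) 0 := by
    simpa using ((hasDerivAt_id (0:ℝ)).smul_const (EuclideanSpace.single i (1:ℝ))).const_add x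
  have hx : x + (0:ℝ) • EuclideanSpace.single i (1:ℝ) = x := by simp
  have hu' : HasFDerivAt u (fderiv ℝ u x) (x + (0:ℝ) • EuclideanSpace.single i (1:ℝ)) := by
    rw [hx]; exact hu.hasFDerivAt
  exact (h.unique (hu'.comp_hasDerivAt 0 hγ)).symm

theorem uSH_diff (k : ℕ) (l : ℤ) (x : EuclideanSpace ℝ (Fin 3)) :
    DifferentiableAt ℝ (uSH k l) x := by
  have hcoord : ∀ j : Fin 3, DifferentiableAt ℝ
      (fun y : EuclideanSpace ℝ (Fin 3) => ((y j : ℝ) : ℂ)) x := fun j =>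
    Complex.ofRealCLM.differentiableAt.comp x (EuclideanSpace.proj (𝕜 := ℝ) j).differentiableAt
  unfold uSH
  apply DifferentiableAt.const_mul
  apply DifferentiableAt.fun_sum; intro p _
  apply DifferentiableAt.fun_sum; intro q _
  by_cases h : (p : ℤ) - (q : ℤ) = l ∧ p + q ≤ k
  · simp only [if_pos h]
    have h0 := hcoord 0; have h1 := hcoord 1; have h2 := hcoord 2
    refine DifferentiableAt.mul (DifferentiableAt.mul (DifferentiableAt.const_mul ?_ _) ?_) ?_
    · exact (((h0.add (h1.const_mul Complex.I)).mul_const ((2:ℂ)⁻¹)).neg).pow p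
    · exact ((h0.sub (h1.const_mul Complex.I)).mul_const ((2:ℂ)⁻¹)).pow q
    · exact h2.pow _
  · simp only [if_neg h]; fun_prop

theorem pd_uSH_gen (k : ℕ) (l : ℤ) (x : EuclideanSpace ℝ (Fin 3)) (i : Fin 3) (α β : ℂ)
    (hW : ∀ t : ℝ, (((x + t • EuclideanSpace.single i (1:ℝ)) 0 : ℝ) : ℂ)
          + Complex.I * (((x + t • EuclideanSpace.single i (1:ℝ)) 1 : ℝ) : ℂ)
        = ((x 0 : ℂ) + Complex.I * (x 1 : ℂ)) + (t:ℂ) * α)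
    (hWb : ∀ t : ℝ, (((x + t • EuclideanSpace.single i (1:ℝ)) 0 : ℝ) : ℂ)
          - Complex.I * (((x + t • EuclideanSpace.single i (1:ℝ)) 1 : ℝ) : ℂ)
        = ((x 0 : ℂ) - Complex.I * (x 1 : ℂ)) + (t:ℂ) * β)
    (hZ : ∀ t : ℝ, (((x + t • EuclideanSpace.single i (1:ℝ)) 2 : ℝ) : ℂ) = (x 2 : ℂ)) :
    pd i (uSH k l) x = (sphC k l : ℂ) *
      ∑ p ∈ Finset.range (k + 1), ∑ q ∈ Finset.range (k + 1),
        if (p : ℤ) - (q : ℤ) = l ∧ p + q ≤ k then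
          (1 / ((p.factorial : ℂ) * (q.factorial : ℂ) * ((k - p - q).factorial : ℂ))) *
            ((p:ℂ) * (-(((x 0 : ℂ) + Complex.I * (x 1 : ℂ))/2))^(p-1) * (-(α/2))
                * (((x 0 : ℂ) - Complex.I * (x 1 : ℂ))/2)^q
             + (q:ℂ) * (-(((x 0 : ℂ) + Complex.I * (x 1 : ℂ))/2))^p
                * (((x 0 : ℂ) - Complex.I * (x 1 : ℂ))/2)^(q-1) * (β/2)) *
            ((x 2 : ℂ))^(k - p - q)
        else 0 := by
  refine pd_line (uSH_diff k l x) i ?_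
  have key : (fun t : ℝ => uSH k l (x + t • EuclideanSpace.single i (1:ℝ)))
      = fun t : ℝ => (sphC k l : ℂ) *
        ∑ p ∈ Finset.range (k + 1), ∑ q ∈ Finset.range (k + 1),
          if (p : ℤ) - (q : ℤ) = l ∧ p + q ≤ k then
            (1 / ((p.factorial : ℂ) * (q.factorial : ℂ) * ((k - p - q).factorial : ℂ))) *
              (-((((x 0 : ℂ) + Complex.I * (x 1 : ℂ)) + (t:ℂ) * α)/2)) ^ p *
              ((((x 0 : ℂ) - Complex.I * (x 1 : ℂ)) + (t:ℂ) * β)/2) ^ q *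
              ((x 2 : ℂ)) ^ (k - p - q)
          else 0 := by
    funext t
    unfold uSH
    simp only [hW t, hWb t, hZ t]
  rw [key]
  refine HasDerivAt.const_mul _ (HasDerivAt.fun_sum fun p _ => HasDerivAt.fun_sum fun q _ => ?_)
  by_cases hc : (p : ℤ) - (q : ℤ) = l ∧ p + q ≤ k
  · simp only [if_pos hc]
    exact termHD _ _ _ _ α β p q (k - p - q)
  · simp only [if_neg hc]
    exact hasDerivAt_const 0 0

theorem dW_uSH_eq (k : ℕ) (l : ℤ) (x : EuclideanSpace ℝ (Fin 3)) :
    dW (uSH k l) x = (sphC k l : ℂ) *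
      ∑ p ∈ Finset.range (k + 1), ∑ q ∈ Finset.range (k + 1),
        if (p : ℤ) - (q : ℤ) = l ∧ p + q ≤ k then
          (-(1/2) : ℂ) *
            ((1 / ((p.factorial : ℂ) * (q.factorial : ℂ) * ((k - p - q).factorial : ℂ))) * (p:ℂ) *
              (-(((x 0 : ℂ) + Complex.I * (x 1 : ℂ))/2))^(p-1) *
              (((x 0 : ℂ) - Complex.I * (x 1 : ℂ))/2)^q *
              ((x 2 : ℂ))^(k - p - q))
        else 0 := by
  have hp0 := pd_uSH_gen k l x 0 1 1
    (by intro t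
        rw [show (x + t • EuclideanSpace.single (0:Fin 3) (1:ℝ)) 0 = x 0 + t by
              simp [PiLp.add_apply, PiLp.smul_apply, EuclideanSpace.single_apply],
            show (x + t • EuclideanSpace.single (0:Fin 3) (1:ℝ)) 1 = x 1 by
              simp [PiLp.add_apply, PiLp.smul_apply, EuclideanSpace.single_apply]]
        push_cast; ring)
    (by intro t
        rw [show (x + t • EuclideanSpace.single (0:Fin 3) (1:ℝ)) 0 = x 0 + t by
              simp [PiLp.add_apply, PiLp.smul_apply, EuclideanSpace.single_apply],
            show (x + t • EuclideanSpace.single (0:Fin 3) (1:ℝ)) 1 = x 1 by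
              simp [PiLp.add_apply, PiLp.smul_apply, EuclideanSpace.single_apply]]
        push_cast; ring)
    (by intro t
        rw [show (x + t • EuclideanSpace.single (0:Fin 3) (1:ℝ)) 2 = x 2 by
              simp [PiLp.add_apply, PiLp.smul_apply, EuclideanSpace.single_apply]])
  have hp1 := pd_uSH_gen k l x 1 Complex.I (-Complex.I)
    (by intro t
        rw [show (x + t • EuclideanSpace.single (1:Fin 3) (1:ℝ)) 0 = x 0 by
              simp [PiLp.add_apply, PiLp.smul_apply, EuclideanSpace.single_apply],
            show (x + t • EuclideanSpace.single (1:Fin 3) (1:ℝ)) 1 = x 1 + t by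
              simp [PiLp.add_apply, PiLp.smul_apply, EuclideanSpace.single_apply]]
        push_cast; ring)
    (by intro t
        rw [show (x + t • EuclideanSpace.single (1:Fin 3) (1:ℝ)) 0 = x 0 by
              simp [PiLp.add_apply, PiLp.smul_apply, EuclideanSpace.single_apply],
            show (x + t • EuclideanSpace.single (1:Fin 3) (1:ℝ)) 1 = x 1 + t by
              simp [PiLp.add_apply, PiLp.smul_apply, EuclideanSpace.single_apply]]
        push_cast; ring)
    (by intro t
        rw [show (x + t • EuclideanSpace.single (1:Fin 3) (1:ℝ)) 2 = x 2 by
              simp [PiLp.add_apply, PiLp.smul_apply, EuclideanSpace.single_apply]])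
  unfold dW
  rw [hp0, hp1]
  have step : ∀ S0 S1 T : ℂ, (1/2 : ℂ) * (S0 - Complex.I * S1) = T →
      (1/2 : ℂ) * ((sphC k l : ℂ) * S0 - Complex.I * ((sphC k l : ℂ) * S1))
        = (sphC k l : ℂ) * T := by
    intro S0 S1 T h; rw [← h]; ring
  apply step
  simp only [Finset.mul_sum, ← Finset.sum_sub_distrib]
  refine Finset.sum_congr rfl fun p _ => Finset.sum_congr rfl fun q _ => ?_
  by_cases hc : (p : ℤ) - (q : ℤ) = l ∧ p + q ≤ k
  · simp only [if_pos hc]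
    linear_combination ((1 / ((p.factorial : ℂ) * (q.factorial : ℂ) * ((k - p - q).factorial : ℂ)))
      * ((x 2 : ℂ))^(k - p - q)
      * ((p:ℂ) * (-(((x 0 : ℂ) + Complex.I * (x 1 : ℂ))/2))^(p-1)
          * (((x 0 : ℂ) - Complex.I * (x 1 : ℂ))/2)^q
        + (q:ℂ) * (-(((x 0 : ℂ) + Complex.I * (x 1 : ℂ))/2))^p
          * (((x 0 : ℂ) - Complex.I * (x 1 : ℂ))/2)^(q-1)) / 4) * Complex.I_sq
  · simp only [if_neg hc]
    simp

theorem const_id (m : ℕ) (l : ℤ) (hl2 : -((m+1 : ℕ) : ℤ) + 2 ≤ l) (hlk : l ≤ ((m+1 : ℕ) : ℤ)) :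
    sphC (m+1) l * (1/2)
      = Real.sqrt ((((m+1 : ℕ) : ℝ) + l - 1) * (((m+1 : ℕ) : ℝ) + l) * (2 * ((m+1 : ℕ) : ℝ) + 1))
          / (2 * Real.sqrt (2 * ((m+1 : ℕ) : ℝ) - 1)) * sphC m (l-1) := by
  obtain ⟨b, hb⟩ : ∃ b : ℕ, (((m+1 : ℕ) : ℤ) + l).toNat = b + 2 :=
    ⟨(((m+1 : ℕ) : ℤ) + l).toNat - 2, by omega⟩
  obtain ⟨d, hd⟩ : ∃ d : ℕ, (((m+1 : ℕ) : ℤ) - l).toNat = d := ⟨_, rfl⟩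
  have hn2 : ((m : ℕ) : ℤ) + (l-1) = ((b : ℕ) : ℤ) := by omega
  have hd2 : ((m : ℕ) : ℤ) - (l-1) = ((d : ℕ) : ℤ) := by omega
  have e1 : ((m+1 : ℕ) : ℝ) + (l : ℝ) = (b : ℝ) + 2 := by
    have : (((m+1 : ℕ) : ℤ) + l) = ((b : ℕ) : ℤ) + 2 := by omega
    exact_mod_cast congrArg (Int.cast : ℤ → ℝ) this
  have hπ : (0:ℝ) < Real.pi := Real.pi_pos
  have hc0 : (0:ℝ) < 2 * ((m+1 : ℕ) : ℝ) - 1 := by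
    have : (1:ℝ) ≤ ((m+1 : ℕ) : ℝ) := by exact_mod_cast Nat.one_le_iff_ne_zero.mpr (by omega)
    linarith
  -- rewrite the toNat's
  unfold sphC
  rw [hb, show ((m : ℕ) : ℤ) + (l-1) = ((b:ℕ) : ℤ) from hn2,
    show ((m : ℕ) : ℤ) - (l-1) = ((d:ℕ) : ℤ) from hd2, hd, Int.toNat_natCast, Int.toNat_natCast]
  set X' : ℝ := (2 * m + 1) / (4 * Real.pi) * b.factorial * d.factorial with hX'
  have hX'0 : 0 ≤ X' := by positivity
  set P : ℝ := (((m+1 : ℕ) : ℝ) + l - 1) * (((m+1 : ℕ) : ℝ) + l) * (2 * ((m+1 : ℕ) : ℝ) + 1) with hP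
  have hP0 : 0 ≤ P := by
    rw [hP, e1, show ((b:ℝ) + 2 - 1) = (b:ℝ) + 1 from by ring]; positivity
  have key : P * X' / (2 * ((m+1 : ℕ) : ℝ) - 1)
      = (2 * (m+1 : ℕ) + 1) / (4 * Real.pi) * (b+2).factorial * d.factorial := by
    rw [div_eq_iff hc0.ne', hP, hX', e1]
    push_cast [Nat.factorial_succ]
    ring
  symm
  calc Real.sqrt P / (2 * Real.sqrt (2 * ((m+1 : ℕ) : ℝ) - 1)) * Real.sqrt X'
      = Real.sqrt (P * X') / (2 * Real.sqrt (2 * ((m+1 : ℕ) : ℝ) - 1)) := by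
        rw [Real.sqrt_mul hP0]; ring
    _ = Real.sqrt (P * X' / (2 * ((m+1 : ℕ) : ℝ) - 1)) / 2 := by
        rw [Real.sqrt_div (by positivity)]; ring
    _ = Real.sqrt ((2 * (m+1 : ℕ) + 1) / (4 * Real.pi) * (b+2).factorial * d.factorial) * (1/2) := by
        rw [key]; ring

theorem sum_shift (m : ℕ) (l : ℤ) (A B Z : ℂ) :
    (∑ p ∈ Finset.range (m+1+1), ∑ q ∈ Finset.range (m+1+1),
       if (p : ℤ) - (q : ℤ) = l ∧ p + q ≤ m+1 then
         (-(1/2) : ℂ) *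
           ((1 / ((p.factorial : ℂ) * (q.factorial : ℂ) * ((m+1 - p - q).factorial : ℂ))) * (p:ℂ) *
             A^(p-1) * B^q * Z^(m+1 - p - q))
       else 0)
    = (-(1/2) : ℂ) * ∑ p ∈ Finset.range (m+1), ∑ q ∈ Finset.range (m+1),
        if (p : ℤ) - (q : ℤ) = l - 1 ∧ p + q ≤ m then
          (1 / ((p.factorial : ℂ) * (q.factorial : ℂ) * ((m - p - q).factorial : ℂ))) *
            A^p * B^q * Z^(m - p - q)
        else 0 := by
  rw [Finset.sum_range_succ' _ (m+1)]
  have h0 : (∑ q ∈ Finset.range (m+1+1),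
      if ((0:ℕ) : ℤ) - (q : ℤ) = l ∧ 0 + q ≤ m+1 then
        (-(1/2) : ℂ) *
          ((1 / (((0:ℕ).factorial : ℂ) * (q.factorial : ℂ) * ((m+1 - 0 - q).factorial : ℂ))) * ((0:ℕ):ℂ) *
            A^(0-1) * B^q * Z^(m+1 - 0 - q))
      else 0) = 0 :=
    Finset.sum_eq_zero fun q _ => by split_ifs <;> simp
  rw [h0, add_zero]
  have hinner : ∀ p ∈ Finset.range (m+1),
      (∑ q ∈ Finset.range (m+1+1),
        if ((p+1 : ℕ) : ℤ) - (q : ℤ) = l ∧ (p+1) + q ≤ m+1 then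
          (-(1/2) : ℂ) *
            ((1 / (((p+1).factorial : ℂ) * (q.factorial : ℂ) * ((m+1 - (p+1) - q).factorial : ℂ))) * ((p+1:ℕ):ℂ) *
              A^((p+1)-1) * B^q * Z^(m+1 - (p+1) - q))
        else 0)
      = ∑ q ∈ Finset.range (m+1),
          if ((p+1 : ℕ) : ℤ) - (q : ℤ) = l ∧ (p+1) + q ≤ m+1 then
            (-(1/2) : ℂ) *
              ((1 / (((p+1).factorial : ℂ) * (q.factorial : ℂ) * ((m+1 - (p+1) - q).factorial : ℂ))) * ((p+1:ℕ):ℂ) *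
                A^((p+1)-1) * B^q * Z^(m+1 - (p+1) - q))
          else 0 := by
    intro p _
    rw [Finset.sum_range_succ, if_neg (by omega), add_zero]
  rw [Finset.sum_congr rfl hinner, Finset.mul_sum]
  refine Finset.sum_congr rfl fun p hp => ?_
  rw [Finset.mul_sum]
  refine Finset.sum_congr rfl fun q hq => ?_
  by_cases hc : (p : ℤ) - (q : ℤ) = l - 1 ∧ p + q ≤ m
  · rw [if_pos hc, if_pos (by push_cast; omega)]
    rw [show m+1 - (p+1) - q = m - p - q from by omega,
      show (p+1) - 1 = p from by omega, Nat.factorial_succ]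
    have h1 : (p.factorial : ℂ) ≠ 0 := Nat.cast_ne_zero.mpr p.factorial_ne_zero
    have h2 : (q.factorial : ℂ) ≠ 0 := Nat.cast_ne_zero.mpr q.factorial_ne_zero
    have h3 : ((m - p - q).factorial : ℂ) ≠ 0 := Nat.cast_ne_zero.mpr (m - p - q).factorial_ne_zero
    have h4 : ((p:ℂ) + 1) ≠ 0 := by
      have : ((p+1 : ℕ) : ℂ) ≠ 0 := Nat.cast_ne_zero.mpr (Nat.succ_ne_zero p)
      push_cast at this; exact this
    push_cast
    field_simp [h1, h2, h3, h4]
  · rw [if_neg hc, if_neg (by push_cast; omega), mul_zero]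


/-- The Wirtinger derivative `∂u_{k,l}/∂w` lowers both indices:
`∂u_{k,l}/∂w = −(√((k+l−1)(k+l)(2k+1))/(2√(2k−1))) u_{k−1,l−1}` for `−k+2 ≤ l ≤ k`,
and `∂u_{k,l}/∂w ≡ 0` for `l ∈ {−k, −k+1}`. -/
theorem dW_uSH (k : ℕ) (hk : 1 ≤ k) :
    (∀ l : ℤ, -(k : ℤ) + 2 ≤ l → l ≤ (k : ℤ) → ∀ x : EuclideanSpace ℝ (Fin 3),
      dW (uSH k l) x
        = -((Real.sqrt (((k : ℝ) + l - 1) * ((k : ℝ) + l) * (2 * (k : ℝ) + 1))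
            / (2 * Real.sqrt (2 * (k : ℝ) - 1)) : ℝ) : ℂ) * uSH (k - 1) (l - 1) x) ∧
    (∀ l : ℤ, (l = -(k : ℤ) ∨ l = -(k : ℤ) + 1) → ∀ x : EuclideanSpace ℝ (Fin 3),
      dW (uSH k l) x = 0) := by
  constructor
  · intro l hl2 hlk x
    obtain ⟨m, rfl⟩ : ∃ m, k = m + 1 := ⟨k - 1, by omega⟩
    rw [dW_uSH_eq, sum_shift m l]
    simp only [Nat.add_sub_cancel]
    unfold uSH
    have hc := const_id m l hl2 hlk
    have hcC := congrArg (fun t : ℝ => (t : ℂ)) hc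
    simp only [Complex.ofReal_mul] at hcC
    rw [show (((1:ℝ)/2 : ℝ) : ℂ) = (1/2 : ℂ) from by norm_num] at hcC
    linear_combination (-(∑ p ∈ Finset.range (m+1), ∑ q ∈ Finset.range (m+1),
        if (p : ℤ) - (q : ℤ) = l - 1 ∧ p + q ≤ m then
          (1 / ((p.factorial : ℂ) * (q.factorial : ℂ) * ((m - p - q).factorial : ℂ))) *
            (-(((x 0 : ℂ) + Complex.I * (x 1 : ℂ)) / 2)) ^ p *
            ((((x 0 : ℂ) - Complex.I * (x 1 : ℂ))) / 2) ^ q *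
            ((x 2 : ℂ)) ^ (m - p - q)
        else 0)) * hcC
  · intro l hl x
    rw [dW_uSH_eq]
    apply mul_eq_zero_of_right
    refine Finset.sum_eq_zero fun p hp => Finset.sum_eq_zero fun q hq => ?_
    rw [Finset.mem_range] at hp hq
    split_ifs with hc
    · obtain ⟨h1, h2⟩ := hc
      obtain rfl : p = 0 := by rcases hl with h | h <;> omega
      simp
    · rfl
end
end

section
/- Let k ≥ 1 be an integer. For every integer l with −k ≤ l ≤ k−2, the Wirtinger derivative ∂u_{k,l}/∂w̄ := (1/2)(∂_x + i ∂_y)u_{k,l} satisfies ∂u_{k,l}/∂w̄ = ( √((k−l−1)(k−l)(2k+1)) / (2√(2k−1)) ) · u_{k−1, l+1} identically on ℝ³. Moreover, for l ∈ {k−1, k} one has ∂u_{k,l}/∂w̄ ≡ 0. -/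
open MeasureTheory Finset

noncomputable section

abbrev E3 := EuclideanSpace ℝ (Fin 3)

def Li (i : Fin 3) : E3 →L[ℝ] ℂ := Complex.ofRealCLM.comp (EuclideanSpace.proj i)
def LW : E3 →L[ℝ] ℂ := (-(2⁻¹ : ℂ)) • (Li 0 + Complex.I • Li 1)
def LWb : E3 →L[ℝ] ℂ := ((2⁻¹ : ℂ)) • (Li 0 - Complex.I • Li 1)

lemma Li_apply (i : Fin 3) (x : E3) : Li i x = ((x i : ℝ) : ℂ) := rfl

lemma LW_apply (x : E3) : LW x = -(((x 0 : ℂ) + Complex.I * (x 1 : ℂ)) / 2) := by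
  simp [LW, Li_apply, smul_eq_mul]; ring

lemma LWb_apply (x : E3) : LWb x = (((x 0 : ℂ) - Complex.I * (x 1 : ℂ))) / 2 := by
  simp [LWb, Li_apply, smul_eq_mul]; ring

lemma Li_single (i j : Fin 3) : Li i (EuclideanSpace.single j (1:ℝ)) = if i = j then 1 else 0 := by
  simp [Li_apply, EuclideanSpace.single_apply]
  split_ifs with h h' h' <;> simp_all [eq_comm]

lemma hasFDerivAt_clm_pow (L : E3 →L[ℝ] ℂ) (n : ℕ) (x : E3) :
    HasFDerivAt (fun y => (L y) ^ n) (((n : ℂ) * (L x) ^ (n - 1)) • L) x := by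
  induction n with
  | zero =>
      have h0 : (((0:ℕ) : ℂ) * (L x) ^ (0 - 1)) • L = 0 := by ext v; simp
      rw [h0]
      simp only [pow_zero]
      exact hasFDerivAt_const (1 : ℂ) x
  | succ n ih =>
      have H := ih.fun_mul L.hasFDerivAt
      have he : (L x) ^ n • L + (L x) • (((n : ℂ) * (L x) ^ (n - 1)) • L)
          = (((n + 1 : ℕ) : ℂ) * (L x) ^ ((n + 1) - 1)) • L := by
        ext v
        simp only [ContinuousLinearMap.add_apply, ContinuousLinearMap.smul_apply,
          smul_eq_mul]
        cases n with
        | zero => simp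
        | succ m => push_cast; rw [pow_succ]; ring
      rw [← he]
      simpa [pow_succ] using H

def monoF (p q s : ℕ) : E3 → ℂ := fun x => (LW x) ^ p * (LWb x) ^ q * (Li 2 x) ^ s

def monoD (p q s : ℕ) (x : E3) : E3 →L[ℝ] ℂ :=
  ((LW x) ^ p * (LWb x) ^ q) • (((s : ℂ) * (Li 2 x) ^ (s - 1)) • (Li 2)) +
    ((Li 2 x) ^ s) • ((LW x) ^ p • (((q : ℂ) * (LWb x) ^ (q - 1)) • LWb) +
      (LWb x) ^ q • (((p : ℂ) * (LW x) ^ (p - 1)) • LW))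

lemma hasFDerivAt_monoF (p q s : ℕ) (x : E3) : HasFDerivAt (monoF p q s) (monoD p q s x) x :=
  ((hasFDerivAt_clm_pow LW p x).mul (hasFDerivAt_clm_pow LWb q x)).mul
    (hasFDerivAt_clm_pow (Li 2) s x)

lemma monoD_comb (p q s : ℕ) (x : E3) :
    (1 / 2 : ℂ) * (monoD p q s x (EuclideanSpace.single 0 (1:ℝ)) +
      Complex.I * monoD p q s x (EuclideanSpace.single 1 (1:ℝ)))
      = ((q : ℂ) / 2) * ((LW x) ^ p * (LWb x) ^ (q - 1) * (Li 2 x) ^ s) := by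
  have i0 : Li 2 (EuclideanSpace.single 0 (1:ℝ)) = 0 := by rw [Li_single, if_neg (by decide)]
  have i1 : Li 2 (EuclideanSpace.single 1 (1:ℝ)) = 0 := by rw [Li_single, if_neg (by decide)]
  have w0 : LW (EuclideanSpace.single 0 (1:ℝ)) = -(2⁻¹) := by
    simp [LW, Li_single, smul_eq_mul]
  have w1 : LW (EuclideanSpace.single 1 (1:ℝ)) = -(Complex.I/2) := by
    simp [LW, Li_single, smul_eq_mul]; ring
  have b0 : LWb (EuclideanSpace.single 0 (1:ℝ)) = 2⁻¹ := by
    simp [LWb, Li_single, smul_eq_mul]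
  have b1 : LWb (EuclideanSpace.single 1 (1:ℝ)) = -(Complex.I/2) := by
    simp [LWb, Li_single, smul_eq_mul]; ring
  simp only [monoD, ContinuousLinearMap.add_apply, ContinuousLinearMap.smul_apply,
    smul_eq_mul, i0, i1, w0, w1, b0, b1, mul_zero, zero_mul, add_zero, zero_add]
  ring_nf
  rw [Complex.I_sq]
  ring

def cf (k p q : ℕ) : ℂ :=
  1 / ((p.factorial : ℂ) * (q.factorial : ℂ) * ((k - p - q).factorial : ℂ))

lemma uSH_eq (k : ℕ) (l : ℤ) (x : E3) :
    uSH k l x = (sphC k l : ℂ) * ∑ p ∈ range (k+1), ∑ q ∈ range (k+1),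
      (if (p:ℤ) - (q:ℤ) = l ∧ p + q ≤ k then cf k p q * monoF p q (k-p-q) x else 0) := by
  unfold uSH
  congr 1
  refine Finset.sum_congr rfl fun p _ => Finset.sum_congr rfl fun q _ => ?_
  split_ifs with h
  · simp only [monoF, LW_apply, LWb_apply, Li_apply, cf]; ring
  · rfl

lemma hasFDerivAt_uSH (k : ℕ) (l : ℤ) (x : E3) :
    HasFDerivAt (uSH k l)
      ((sphC k l : ℂ) • ∑ p ∈ range (k+1), ∑ q ∈ range (k+1),
        (if (p:ℤ) - (q:ℤ) = l ∧ p + q ≤ k then cf k p q • monoD p q (k-p-q) x else 0)) x := by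
  have hrw : uSH k l = fun y => (sphC k l : ℂ) * ∑ p ∈ range (k+1), ∑ q ∈ range (k+1),
      (if (p:ℤ) - (q:ℤ) = l ∧ p + q ≤ k then cf k p q * monoF p q (k-p-q) y else 0) :=
    funext (uSH_eq k l)
  rw [hrw]
  refine HasFDerivAt.const_mul ?_ _
  refine HasFDerivAt.fun_sum fun p _ => HasFDerivAt.fun_sum fun q _ => ?_
  by_cases h : (p:ℤ) - (q:ℤ) = l ∧ p + q ≤ k
  · simp only [if_pos h]
    exact (hasFDerivAt_monoF p q (k-p-q) x).const_mul _
  · simp only [if_neg h]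
    exact hasFDerivAt_const 0 x

lemma pd_uSH (k : ℕ) (l : ℤ) (i : Fin 3) (x : E3) :
    pd i (uSH k l) x
      = ((sphC k l : ℂ) • ∑ p ∈ range (k+1), ∑ q ∈ range (k+1),
        (if (p:ℤ) - (q:ℤ) = l ∧ p + q ≤ k then cf k p q • monoD p q (k-p-q) x else 0))
          (EuclideanSpace.single i (1:ℝ)) := by
  rw [pd, (hasFDerivAt_uSH k l x).fderiv]

lemma dWbar_uSH_eq (k : ℕ) (l : ℤ) (x : E3) :
    dWbar (uSH k l) x = (sphC k l : ℂ) * ∑ p ∈ range (k+1), ∑ q ∈ range (k+1),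
      (if (p:ℤ) - (q:ℤ) = l ∧ p + q ≤ k then
        cf k p q * (((q:ℂ)/2) * ((LW x) ^ p * (LWb x) ^ (q-1) * (Li 2 x) ^ (k-p-q)))
      else 0) := by
  rw [dWbar, pd_uSH, pd_uSH]
  simp only [ContinuousLinearMap.smul_apply, ContinuousLinearMap.sum_apply, smul_eq_mul,
    apply_ite (fun L : E3 →L[ℝ] ℂ => L (EuclideanSpace.single 0 (1:ℝ))),
    apply_ite (fun L : E3 →L[ℝ] ℂ => L (EuclideanSpace.single 1 (1:ℝ))),
    ContinuousLinearMap.zero_apply]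
  simp only [Finset.mul_sum]
  rw [← Finset.sum_add_distrib, Finset.mul_sum]
  refine Finset.sum_congr rfl fun p _ => ?_
  rw [← Finset.sum_add_distrib, Finset.mul_sum]
  refine Finset.sum_congr rfl fun q _ => ?_
  split_ifs with h
  · rw [← monoD_comb p q (k-p-q) x]; ring
  · simp

lemma aux_cf (P Q S M c : ℂ) (hP : P ≠ 0) (hQ : Q ≠ 0) (hS : S ≠ 0) (hc : c ≠ 0) :
    1 / (P * (c * Q) * S) * (c / 2 * M) = 1/2 * (1/(P*Q*S) * M) := by
  have hX : P * (c * Q) * S ≠ 0 := mul_ne_zero (mul_ne_zero hP (mul_ne_zero hc hQ)) hS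
  apply mul_left_cancel₀ hX
  field_simp

lemma aux_sqrt (nb nm x q : ℝ) (hnb : 0 ≤ nb) (hm : 0 < nm) (h : nb * q = nm * x) :
    Real.sqrt x * (1/2) = Real.sqrt nb / (2 * Real.sqrt nm) * Real.sqrt q := by
  rw [div_mul_eq_mul_div, ← Real.sqrt_mul hnb, h, Real.sqrt_mul hm.le]
  have hnz : Real.sqrt nm ≠ 0 := (Real.sqrt_pos.mpr hm).ne'
  field_simp

lemma const_eq (m : ℕ) (l : ℤ) (h2 : l ≤ ((m+1:ℕ):ℤ) - 2) :
    sphC (m+1) l * (1/2)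
      = Real.sqrt ((((m+1:ℕ):ℝ) - (l:ℝ) - 1) * (((m+1:ℕ):ℝ) - (l:ℝ)) * (2*((m+1:ℕ):ℝ)+1))
        / (2 * Real.sqrt (2*((m+1:ℕ):ℝ) - 1)) * sphC m (l+1) := by
  have hl1 : l + 1 ≤ (m:ℤ) := by push_cast at h2; omega
  set b := ((m:ℤ) - (l+1)).toNat with hb
  have hb2 : ((((m+1:ℕ)):ℤ) - l).toNat = b + 2 := by push_cast; omega
  have hbr : (b:ℝ) = (m:ℝ) - (l:ℝ) - 1 := by
    have h : (b:ℤ) = (m:ℤ) - (l+1) := Int.toNat_of_nonneg (by omega)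
    have := congrArg (fun z : ℤ => (z:ℝ)) h
    push_cast at this
    linarith
  unfold sphC
  rw [hb2]
  have hm1 : ((m+1:ℕ):ℝ) = (m:ℝ) + 1 := by push_cast; ring
  have e1 : (((m+1:ℕ):ℝ) - (l:ℝ) - 1) = (b:ℝ) + 1 := by rw [hm1, hbr]; ring
  have e2 : (((m+1:ℕ):ℝ) - (l:ℝ)) = (b:ℝ) + 2 := by rw [hm1, hbr]; ring
  have e3 : (2*((m+1:ℕ):ℝ) - 1) = 2*(m:ℝ)+1 := by rw [hm1]; ring
  rw [e3]
  have h2m1 : (0:ℝ) < 2*(m:ℝ)+1 := by positivity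
  have f2 : (((b+2).factorial : ℕ) : ℝ) = ((b:ℝ)+2)*((b:ℝ)+1)*(b.factorial : ℝ) := by
    rw [Nat.factorial_succ, Nat.factorial_succ]; push_cast; ring
  refine aux_sqrt _ _ _ _ ?_ h2m1 ?_
  · rw [e1, e2]; positivity
  · rw [e1, e2, f2]
    have ha : ((m:ℤ) + (l+1)).toNat = ((((m+1:ℕ)):ℤ) + l).toNat := by push_cast; omega
    rw [ha, hm1]
    ring

lemma sum_reindex (m : ℕ) (l : ℤ) (x : E3) :
    (∑ p ∈ range (m+1+1), ∑ q ∈ range (m+1+1),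
      (if (p:ℤ) - (q:ℤ) = l ∧ p + q ≤ m+1 then
        cf (m+1) p q * (((q:ℂ)/2) * ((LW x) ^ p * (LWb x) ^ (q-1) * (Li 2 x) ^ (m+1-p-q)))
      else 0))
    = (1/2 : ℂ) * ∑ p ∈ range (m+1), ∑ q ∈ range (m+1),
      (if (p:ℤ) - (q:ℤ) = l+1 ∧ p + q ≤ m then cf m p q * monoF p q (m-p-q) x else 0) := by
  rw [← Finset.sum_subset (Finset.range_subset_range.mpr (show m+1 ≤ m+1+1 by omega))
    (fun p hp hnp => Finset.sum_eq_zero fun q hq => by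
      have hp1 : p = m+1 := by
        simp only [Finset.mem_range] at hp hnp; omega
      split_ifs with h
      · obtain rfl : q = 0 := by omega
        simp
      · rfl)]
  rw [Finset.mul_sum]
  refine Finset.sum_congr rfl fun p hp => ?_
  have hp' : p < m + 1 := Finset.mem_range.mp hp
  rw [Finset.sum_range_succ']
  have h0 : (if ((p:ℤ) - ((0:ℕ):ℤ) = l ∧ p + 0 ≤ m+1) then
      cf (m+1) p 0 * ((((0:ℕ):ℂ)/2) * ((LW x) ^ p * (LWb x) ^ (0-1) * (Li 2 x) ^ (m+1-p-0)))
    else 0) = 0 := by split_ifs <;> simp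
  rw [h0, add_zero, Finset.mul_sum]
  refine Finset.sum_congr rfl fun q hq => ?_
  by_cases h : (p:ℤ) - (q:ℤ) = l + 1 ∧ p + q ≤ m
  · have h' : (p:ℤ) - ((q+1:ℕ):ℤ) = l ∧ p + (q+1) ≤ m+1 := by
      obtain ⟨h1, hle⟩ := h
      constructor
      · push_cast; omega
      · omega
    rw [if_pos h', if_pos h]
    have hs : m+1-p-(q+1) = m-p-q := by omega
    rw [hs, Nat.add_sub_cancel]
    unfold cf monoF
    rw [show (m+1)-p-(q+1) = m-p-q from by omega, Nat.factorial_succ]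
    have hfp : (p.factorial:ℂ) ≠ 0 := Nat.cast_ne_zero.mpr p.factorial_ne_zero
    have hfq : (q.factorial:ℂ) ≠ 0 := Nat.cast_ne_zero.mpr q.factorial_ne_zero
    have hfs : (((m-p-q).factorial:ℕ):ℂ) ≠ 0 := Nat.cast_ne_zero.mpr (m-p-q).factorial_ne_zero
    have hq1 : ((q:ℂ)+1) ≠ 0 := by
      have := Nat.cast_add_one_ne_zero (R := ℂ) q
      exact_mod_cast this
    push_cast
    exact aux_cf _ _ _ _ _ hfp hfq hfs hq1
  · have h' : ¬((p:ℤ) - ((q+1:ℕ):ℤ) = l ∧ p + (q+1) ≤ m+1) := by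
      push_cast
      push_cast at h
      omega
    rw [if_neg h, if_neg h', mul_zero]

/-- The Wirtinger derivative `∂u_{k,l}/∂w̄` lowers `k` and raises `l`:
`∂u_{k,l}/∂w̄ = (√((k−l−1)(k−l)(2k+1))/(2√(2k−1))) u_{k−1,l+1}` for `−k ≤ l ≤ k−2`,
and `∂u_{k,l}/∂w̄ ≡ 0` for `l ∈ {k−1, k}`. -/
theorem dWbar_uSH (k : ℕ) (hk : 1 ≤ k) :
    (∀ l : ℤ, -(k : ℤ) ≤ l → l ≤ (k : ℤ) - 2 → ∀ x : EuclideanSpace ℝ (Fin 3),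
      dWbar (uSH k l) x
        = ((Real.sqrt (((k : ℝ) - l - 1) * ((k : ℝ) - l) * (2 * (k : ℝ) + 1))
            / (2 * Real.sqrt (2 * (k : ℝ) - 1)) : ℝ) : ℂ) * uSH (k - 1) (l + 1) x) ∧
    (∀ l : ℤ, (l = (k : ℤ) - 1 ∨ l = (k : ℤ)) → ∀ x : EuclideanSpace ℝ (Fin 3),
      dWbar (uSH k l) x = 0) := by
  obtain ⟨m, rfl⟩ : ∃ m, k = m + 1 := ⟨k - 1, by omega⟩
  constructor
  · intro l h1 h2 x
    rw [dWbar_uSH_eq, sum_reindex m l x]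
    simp only [Nat.add_sub_cancel]
    rw [uSH_eq m (l+1) x]
    have hc := const_eq m l h2
    rw [show ((sphC (m+1) l : ℝ) : ℂ) * ((1/2 : ℂ) * (∑ p ∈ range (m+1), ∑ q ∈ range (m+1),
        (if (p:ℤ) - (q:ℤ) = l+1 ∧ p + q ≤ m then cf m p q * monoF p q (m-p-q) x else 0)))
      = ((sphC (m+1) l * (1/2) : ℝ) : ℂ) * (∑ p ∈ range (m+1), ∑ q ∈ range (m+1),
        (if (p:ℤ) - (q:ℤ) = l+1 ∧ p + q ≤ m then cf m p q * monoF p q (m-p-q) x else 0))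
      from by push_cast; ring]
    rw [hc]
    push_cast
    ring
  · intro l hl x
    rw [dWbar_uSH_eq]
    rw [Finset.sum_eq_zero, mul_zero]
    intro p hp
    refine Finset.sum_eq_zero fun q hq => ?_
    split_ifs with h
    · obtain rfl : q = 0 := by rcases hl with rfl | rfl <;> omega
      simp
    · rfl
end
end

section
/- For all integers k ≥ 0 and −k ≤ l ≤ k, the function u_{k,l} is a homogeneous polynomial of degree k in (x,y,z) (i.e. u_{k,l}(t·v) = t^k u_{k,l}(v) for all t ∈ ℝ and v ∈ ℝ³) and is harmonic on ℝ³, i.e. ∂²u_{k,l}/∂x² + ∂²u_{k,l}/∂y² + ∂²u_{k,l}/∂z² = 0 identically. -/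
open MeasureTheory Finset

noncomputable section

namespace SHaux

abbrev E3 := EuclideanSpace ℝ (Fin 3)

def wF (x : E3) : ℂ := (x 0 : ℂ) + Complex.I * (x 1 : ℂ)
def wbF (x : E3) : ℂ := (x 0 : ℂ) - Complex.I * (x 1 : ℂ)
def zF (x : E3) : ℂ := (x 2 : ℂ)

def mon (a b c : ℕ) (x : E3) : ℂ := wF x ^ a * wbF x ^ b * zF x ^ c

def Lw : E3 →L[ℝ] ℂ :=
  Complex.ofRealCLM.comp (EuclideanSpace.proj 0) +
    Complex.I • Complex.ofRealCLM.comp (EuclideanSpace.proj 1)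
def Lwb : E3 →L[ℝ] ℂ :=
  Complex.ofRealCLM.comp (EuclideanSpace.proj 0) -
    Complex.I • Complex.ofRealCLM.comp (EuclideanSpace.proj 1)
def Lz : E3 →L[ℝ] ℂ := Complex.ofRealCLM.comp (EuclideanSpace.proj 2)

lemma Lw_apply (v : E3) : Lw v = (v 0 : ℂ) + Complex.I * (v 1 : ℂ) := by
  simp [Lw, smul_eq_mul]
lemma Lwb_apply (v : E3) : Lwb v = (v 0 : ℂ) - Complex.I * (v 1 : ℂ) := by
  simp [Lwb, smul_eq_mul]
lemma Lz_apply (v : E3) : Lz v = (v 2 : ℂ) := by simp [Lz]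

lemma hasFDerivAt_wF (x : E3) : HasFDerivAt wF Lw x := by
  have h : wF = ⇑Lw := by funext v; rw [Lw_apply]; rfl
  rw [h]; exact Lw.hasFDerivAt
lemma hasFDerivAt_wbF (x : E3) : HasFDerivAt wbF Lwb x := by
  have h : wbF = ⇑Lwb := by funext v; rw [Lwb_apply]; rfl
  rw [h]; exact Lwb.hasFDerivAt
lemma hasFDerivAt_zF (x : E3) : HasFDerivAt zF Lz x := by
  have h : zF = ⇑Lz := by funext v; rw [Lz_apply]; rfl
  rw [h]; exact Lz.hasFDerivAt

lemma hasFDerivAt_pow' {f : E3 → ℂ} {f' : E3 →L[ℝ] ℂ} {x : E3}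
    (hf : HasFDerivAt f f' x) (n : ℕ) :
    HasFDerivAt (fun y => f y ^ n) (((n : ℂ) * f x ^ (n - 1)) • f') x := by
  induction n with
  | zero =>
    simp only [pow_zero, Nat.cast_zero, zero_mul]
    rw [show (0 : ℂ) • f' = 0 from zero_smul ℂ f']
    exact hasFDerivAt_const (𝕜 := ℝ) (1 : ℂ) x
  | succ n ih =>
    have h := ih.fun_mul hf
    have : (fun y => f y ^ n * f y) = fun y => f y ^ (n + 1) := by
      funext y; rw [← pow_succ]
    rw [this] at h
    refine h.congr_fderiv ?_
    ext v
    simp only [ContinuousLinearMap.add_apply, ContinuousLinearMap.smul_apply, smul_eq_mul]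
    rcases Nat.eq_zero_or_pos n with hn | hn
    · subst hn; simp
    · have h1 : n - 1 + 1 = n := Nat.succ_pred_eq_of_pos hn
      have : f x ^ n = f x ^ (n - 1) * f x := by rw [← pow_succ, h1]
      rw [Nat.add_sub_cancel, this]
      push_cast
      ring

def monD (a b c : ℕ) (x : E3) : E3 →L[ℝ] ℂ :=
  (((a : ℂ) * wF x ^ (a - 1)) * wbF x ^ b * zF x ^ c) • Lw +
  ((wF x ^ a * ((b : ℂ) * wbF x ^ (b - 1))) * zF x ^ c) • Lwb +
  ((wF x ^ a * wbF x ^ b) * ((c : ℂ) * zF x ^ (c - 1))) • Lz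

lemma hasFDerivAt_mon (a b c : ℕ) (x : E3) : HasFDerivAt (mon a b c) (monD a b c x) x := by
  have h := ((hasFDerivAt_pow' (hasFDerivAt_wF x) a).fun_mul
    (hasFDerivAt_pow' (hasFDerivAt_wbF x) b)).fun_mul (hasFDerivAt_pow' (hasFDerivAt_zF x) c)
  refine h.congr_fderiv ?_
  ext v
  simp only [monD, ContinuousLinearMap.add_apply, ContinuousLinearMap.smul_apply, smul_eq_mul]
  ring


def cw (j : Fin 3) : ℂ := if j = 0 then 1 else if j = 1 then Complex.I else 0
def cwb (j : Fin 3) : ℂ := if j = 0 then 1 else if j = 1 then -Complex.I else 0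
def cz (j : Fin 3) : ℂ := if j = 2 then 1 else 0

def monPD (j : Fin 3) (a b c : ℕ) (x : E3) : ℂ :=
  (a : ℂ) * cw j * mon (a - 1) b c x + (b : ℂ) * cwb j * mon a (b - 1) c x +
    (c : ℂ) * cz j * mon a b (c - 1) x

lemma e_apply (j i : Fin 3) : (EuclideanSpace.single j (1 : ℝ)) i = if i = j then 1 else 0 := by
  rw [EuclideanSpace.single_apply]

lemma monD_apply_single (j : Fin 3) (a b c : ℕ) (x : E3) :
    monD a b c x (EuclideanSpace.single j (1 : ℝ)) = monPD j a b c x := by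
  have h0 := e_apply j 0; have h1 := e_apply j 1; have h2 := e_apply j 2
  simp only [monD, monPD, ContinuousLinearMap.add_apply, ContinuousLinearMap.smul_apply,
    smul_eq_mul, Lw_apply, Lwb_apply, Lz_apply, h0, h1, h2, mon, cw, cwb, cz]
  fin_cases j <;> simp <;> ring

lemma pd_sum {ι : Type} (s : Finset ι) (cc : ι → ℂ) (a b d : ι → ℕ) (j : Fin 3) (x : E3) :
    pd j (fun y => ∑ i ∈ s, cc i * mon (a i) (b i) (d i) y) x =
      ∑ i ∈ s, cc i * monPD j (a i) (b i) (d i) x := by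
  have H : HasFDerivAt (fun y => ∑ i ∈ s, cc i * mon (a i) (b i) (d i) y)
      (∑ i ∈ s, cc i • monD (a i) (b i) (d i) x) x := by
    exact HasFDerivAt.fun_sum fun i _ => (hasFDerivAt_mon (a i) (b i) (d i) x).const_mul (cc i)
  rw [pd, H.fderiv]
  simp only [ContinuousLinearMap.coe_sum', Finset.sum_apply, ContinuousLinearMap.coe_smul',
    Pi.smul_apply, smul_eq_mul, monD_apply_single]


lemma pd_pd_sum {ι : Type} (s : Finset ι) (cc : ι → ℂ) (a b d : ι → ℕ) (j : Fin 3) (x : E3) :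
    pd j (pd j (fun y => ∑ i ∈ s, cc i * mon (a i) (b i) (d i) y)) x =
      ∑ i ∈ s, cc i *
        ((a i : ℂ) * cw j * monPD j (a i - 1) (b i) (d i) x +
         (b i : ℂ) * cwb j * monPD j (a i) (b i - 1) (d i) x +
         (d i : ℂ) * cz j * monPD j (a i) (b i) (d i - 1) x) := by
  set cc' : ι × Fin 3 → ℂ := fun im =>
    cc im.1 * (if im.2 = 0 then (a im.1 : ℂ) * cw j else
      if im.2 = 1 then (b im.1 : ℂ) * cwb j else (d im.1 : ℂ) * cz j) with hcc'
  set a' : ι × Fin 3 → ℕ := fun im => if im.2 = 0 then a im.1 - 1 else a im.1 with ha'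
  set b' : ι × Fin 3 → ℕ := fun im => if im.2 = 1 then b im.1 - 1 else b im.1 with hb'
  set d' : ι × Fin 3 → ℕ := fun im => if im.2 = 2 then d im.1 - 1 else d im.1 with hd'
  have h1 : pd j (fun y => ∑ i ∈ s, cc i * mon (a i) (b i) (d i) y) =
      fun y => ∑ im ∈ s ×ˢ (Finset.univ : Finset (Fin 3)),
        cc' im * mon (a' im) (b' im) (d' im) y := by
    funext y
    rw [pd_sum, Finset.sum_product]
    refine Finset.sum_congr rfl fun i _ => ?_
    rw [Fin.sum_univ_three]
    simp only [hcc', ha', hb', hd', monPD, show ((0:Fin 3) = 2) = False by decide,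
      show ((1:Fin 3) = 2) = False by decide, show ((2:Fin 3) = 0) = False by decide,
      show ((2:Fin 3) = 1) = False by decide, show ((2:Fin 3) = 2) = True by decide,
      show ((0:Fin 3) = 0) = True by decide, show ((0:Fin 3) = 1) = False by decide, show ((1:Fin 3) = 0) = False by decide,
      show ((1:Fin 3) = 1) = True by decide, if_true, if_false]
    ring
  rw [h1, pd_sum, Finset.sum_product]
  refine Finset.sum_congr rfl fun i _ => ?_
  rw [Fin.sum_univ_three]
  simp only [hcc', ha', hb', hd', show ((0:Fin 3) = 2) = False by decide,
    show ((1:Fin 3) = 2) = False by decide, show ((2:Fin 3) = 0) = False by decide,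
    show ((2:Fin 3) = 1) = False by decide, show ((2:Fin 3) = 2) = True by decide,
    show ((0:Fin 3) = 0) = True by decide, show ((0:Fin 3) = 1) = False by decide, show ((1:Fin 3) = 0) = False by decide,
    show ((1:Fin 3) = 1) = True by decide, if_true, if_false]
  ring


def A (k : ℕ) (l : ℤ) (p q : ℕ) : ℂ :=
  if (p : ℤ) - (q : ℤ) = l ∧ p + q ≤ k then
    (sphC k l : ℂ) * (-1) ^ p /
      (2 ^ (p + q) * (p.factorial : ℂ) * (q.factorial : ℂ) * ((k - p - q).factorial : ℂ))
  else 0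

lemma uSH_eq (k : ℕ) (l : ℤ) (x : E3) :
    uSH k l x = ∑ i ∈ Finset.range (k + 1) ×ˢ Finset.range (k + 1),
      A k l i.1 i.2 * mon i.1 i.2 (k - i.1 - i.2) x := by
  rw [Finset.sum_product, uSH, Finset.mul_sum]
  refine Finset.sum_congr rfl fun p _ => ?_
  rw [Finset.mul_sum]
  refine Finset.sum_congr rfl fun q _ => ?_
  by_cases h : (p : ℤ) - (q : ℤ) = l ∧ p + q ≤ k
  · rw [if_pos h]
    simp only [A, if_pos h, mon, wF, wbF, zF]
    have hp : (p.factorial : ℂ) ≠ 0 := Nat.cast_ne_zero.mpr p.factorial_ne_zero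
    have hq : (q.factorial : ℂ) ≠ 0 := Nat.cast_ne_zero.mpr q.factorial_ne_zero
    have hs : (((k - p - q).factorial : ℕ) : ℂ) ≠ 0 :=
      Nat.cast_ne_zero.mpr (k - p - q).factorial_ne_zero
    have h2 : (2 : ℂ) ^ (p + q) ≠ 0 := pow_ne_zero _ two_ne_zero
    rw [show -((↑(x 0) + Complex.I * ↑(x 1)) / 2) = (-(↑(x 0) + Complex.I * ↑(x 1))) / 2 by ring,
      div_pow, div_pow, neg_pow]
    rw [pow_add (2:ℂ)]
    field_simp
  · rw [if_neg h]; simp [A, h]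

lemma mon_smul (a b c : ℕ) (t : ℝ) (v : E3) :
    mon a b c (t • v) = (t : ℂ) ^ (a + b + c) * mon a b c v := by
  have hw : wF (t • v) = (t : ℂ) * wF v := by
    simp only [wF, PiLp.smul_apply, smul_eq_mul]; push_cast; ring
  have hwb : wbF (t • v) = (t : ℂ) * wbF v := by
    simp only [wbF, PiLp.smul_apply, smul_eq_mul]; push_cast; ring
  have hz : zF (t • v) = (t : ℂ) * zF v := by
    simp only [zF, PiLp.smul_apply, smul_eq_mul]; push_cast; ring
  simp only [mon, hw, hwb, hz, mul_pow]
  ring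


lemma lap_mon (a b c : ℕ) (x : E3) :
    ((a : ℂ) * cw 0 * monPD 0 (a - 1) b c x + (b : ℂ) * cwb 0 * monPD 0 a (b - 1) c x +
        (c : ℂ) * cz 0 * monPD 0 a b (c - 1) x) +
      ((a : ℂ) * cw 1 * monPD 1 (a - 1) b c x + (b : ℂ) * cwb 1 * monPD 1 a (b - 1) c x +
        (c : ℂ) * cz 1 * monPD 1 a b (c - 1) x) +
      ((a : ℂ) * cw 2 * monPD 2 (a - 1) b c x + (b : ℂ) * cwb 2 * monPD 2 a (b - 1) c x +
        (c : ℂ) * cz 2 * monPD 2 a b (c - 1) x) =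
    4 * (a : ℂ) * (b : ℂ) * mon (a - 1) (b - 1) c x +
      (c : ℂ) * ((c - 1 : ℕ) : ℂ) * mon a b (c - 2) x := by
  have e1 : a - 1 - 1 = a - 2 := by omega
  have e2 : b - 1 - 1 = b - 2 := by omega
  have e3 : c - 1 - 1 = c - 2 := by omega
  simp only [monPD, cw, cwb, cz, e1, e2, e3,
    show ((0:Fin 3) = 0) = True by decide, show ((0:Fin 3) = 1) = False by decide,
    show ((0:Fin 3) = 2) = False by decide, show ((1:Fin 3) = 0) = False by decide,
    show ((1:Fin 3) = 1) = True by decide, show ((1:Fin 3) = 2) = False by decide,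
    show ((2:Fin 3) = 0) = False by decide, show ((2:Fin 3) = 1) = False by decide,
    show ((2:Fin 3) = 2) = True by decide, if_true, if_false]
  linear_combination ((a : ℂ) * ((a - 1 : ℕ) : ℂ) * mon (a - 2) b c x +
    (b : ℂ) * ((b - 1 : ℕ) : ℂ) * mon a (b - 2) c x -
    2 * (a : ℂ) * (b : ℂ) * mon (a - 1) (b - 1) c x) * Complex.I_sq


lemma A_top (k : ℕ) (l : ℤ) (p q : ℕ) (h : k < p + q) : A k l p q = 0 := by
  rw [A, if_neg]; rintro ⟨-, h2⟩; omega

lemma double_shift {M : Type} [AddCommMonoid M] (k : ℕ) (f : ℕ → ℕ → M)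
    (h0 : ∀ q, f 0 q = 0) (h0' : ∀ p, f p 0 = 0)
    (htop : ∀ q, f (k + 1) (q + 1) = 0) (htop' : ∀ p, f (p + 1) (k + 1) = 0) :
    ∑ p ∈ Finset.range (k + 1), ∑ q ∈ Finset.range (k + 1), f p q =
      ∑ p ∈ Finset.range (k + 1), ∑ q ∈ Finset.range (k + 1), f (p + 1) (q + 1) := by
  rw [Finset.sum_range_succ']
  simp only [h0, Finset.sum_const_zero, add_zero]
  have h1 : ∀ p, ∑ q ∈ Finset.range (k + 1), f (p + 1) q =
      ∑ q ∈ Finset.range k, f (p + 1) (q + 1) := by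
    intro p; rw [Finset.sum_range_succ', h0', add_zero]
  simp only [h1]
  rw [Finset.sum_range_succ (fun p => ∑ q ∈ Finset.range (k + 1), f (p + 1) (q + 1)) k]
  simp only [htop, Finset.sum_const_zero, add_zero]
  refine Finset.sum_congr rfl fun p _ => ?_
  rw [Finset.sum_range_succ, htop', add_zero]

lemma shift (k : ℕ) (l : ℤ) (x : E3) :
    ∑ i ∈ Finset.range (k + 1) ×ˢ Finset.range (k + 1),
        A k l i.1 i.2 * (4 * (i.1 : ℂ) * (i.2 : ℂ) * mon (i.1 - 1) (i.2 - 1) (k - i.1 - i.2) x) =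
      ∑ i ∈ Finset.range (k + 1) ×ˢ Finset.range (k + 1),
        A k l (i.1 + 1) (i.2 + 1) *
          (4 * ((i.1 + 1 : ℕ) : ℂ) * ((i.2 + 1 : ℕ) : ℂ) * mon i.1 i.2 (k - i.1 - i.2 - 2) x) := by
  rw [Finset.sum_product, Finset.sum_product]
  rw [double_shift k
    (fun p q => A k l p q * (4 * (p : ℂ) * (q : ℂ) * mon (p - 1) (q - 1) (k - p - q) x))
    (by intro q; simp) (by intro p; simp)
    (by intro q; show A k l (k + 1) (q + 1) * _ = 0; rw [A_top k l _ _ (by omega)]; ring)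
    (by intro p; show A k l (p + 1) (k + 1) * _ = 0; rw [A_top k l _ _ (by omega)]; ring)]
  refine Finset.sum_congr rfl fun p _ => Finset.sum_congr rfl fun q _ => ?_
  rw [show p + 1 - 1 = p from by omega, show q + 1 - 1 = q from by omega,
    show k - (p + 1) - (q + 1) = k - p - q - 2 from by omega]

lemma coeff_cancel (k : ℕ) (l : ℤ) (p q : ℕ) :
    A k l (p + 1) (q + 1) * (4 * ((p + 1 : ℕ) : ℂ) * ((q + 1 : ℕ) : ℂ)) +
      A k l p q * (((k - p - q : ℕ) : ℂ) * ((k - p - q - 1 : ℕ) : ℂ)) = 0 := by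
  by_cases hcond : (p : ℤ) - (q : ℤ) = l ∧ p + q + 2 ≤ k
  · obtain ⟨hc1, hc2⟩ := hcond
    obtain ⟨m, hm⟩ : ∃ m, k - p - q = m + 2 := ⟨k - p - q - 2, by omega⟩
    have hA1 : A k l (p + 1) (q + 1) = (sphC k l : ℂ) * (-1) ^ (p + 1) /
        (2 ^ (p + 1 + (q + 1)) * ((p + 1).factorial : ℂ) * ((q + 1).factorial : ℂ) *
          (m.factorial : ℂ)) := by
      rw [A, if_pos ⟨by push_cast; linarith, by omega⟩,
        show k - (p + 1) - (q + 1) = m from by omega]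
    have hA2 : A k l p q = (sphC k l : ℂ) * (-1) ^ p /
        (2 ^ (p + q) * (p.factorial : ℂ) * (q.factorial : ℂ) * (((m + 2).factorial : ℕ) : ℂ)) := by
      rw [A, if_pos ⟨hc1, by omega⟩, hm]
    rw [hA1, hA2, hm, show m + 2 - 1 = m + 1 from by omega]
    have hp : (p.factorial : ℂ) ≠ 0 := Nat.cast_ne_zero.mpr p.factorial_ne_zero
    have hq : (q.factorial : ℂ) ≠ 0 := Nat.cast_ne_zero.mpr q.factorial_ne_zero
    have hm' : (m.factorial : ℂ) ≠ 0 := Nat.cast_ne_zero.mpr m.factorial_ne_zero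
    have h2 : (2 : ℂ) ^ (p + q) ≠ 0 := pow_ne_zero _ two_ne_zero
    have hp1 : (((p + 1).factorial : ℕ) : ℂ) ≠ 0 := Nat.cast_ne_zero.mpr (p + 1).factorial_ne_zero
    have hq1 : (((q + 1).factorial : ℕ) : ℂ) ≠ 0 := Nat.cast_ne_zero.mpr (q + 1).factorial_ne_zero
    have hm2 : (((m + 2).factorial : ℕ) : ℂ) ≠ 0 := Nat.cast_ne_zero.mpr (m + 2).factorial_ne_zero
    have h2' : (2 : ℂ) ^ (p + 1 + (q + 1)) ≠ 0 := pow_ne_zero _ two_ne_zero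
    rw [div_mul_eq_mul_div, div_mul_eq_mul_div, div_add_div _ _
      (by exact mul_ne_zero (mul_ne_zero (mul_ne_zero h2' hp1) hq1) hm')
      (by exact mul_ne_zero (mul_ne_zero (mul_ne_zero h2 hp) hq) hm2), div_eq_zero_iff]
    left
    have e1 : ((p + 1).factorial : ℂ) = ((p : ℂ) + 1) * (p.factorial : ℂ) := by
      rw [Nat.factorial_succ]; push_cast; ring
    have e2 : ((q + 1).factorial : ℂ) = ((q : ℂ) + 1) * (q.factorial : ℂ) := by
      rw [Nat.factorial_succ]; push_cast; ring
    have e3 : (((m + 2).factorial : ℕ) : ℂ) =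
        ((m : ℂ) + 2) * ((m : ℂ) + 1) * (m.factorial : ℂ) := by
      rw [Nat.factorial_succ, Nat.factorial_succ]; push_cast; ring
    rw [e1, e2, e3, pow_succ, show p + 1 + (q + 1) = p + q + 1 + 1 from by omega,
      pow_succ, pow_succ]
    push_cast
    ring
  · have hA1 : A k l (p + 1) (q + 1) = 0 := by
      rw [A, if_neg]; rintro ⟨h1, h2⟩
      refine hcond ⟨by push_cast at h1; linarith, by omega⟩
    rw [hA1, zero_mul, zero_add]
    by_cases h2 : (p : ℤ) - (q : ℤ) = l ∧ p + q ≤ k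
    · have hle : k ≤ p + q + 1 := by
        by_contra hgt
        exact hcond ⟨h2.1, by omega⟩
      have h01 : k - p - q = 0 ∨ k - p - q = 1 := by omega
      have hd : (k - p - q) * (k - p - q - 1) = 0 := by
        rcases h01 with h | h <;> simp [h]
      have : ((k - p - q : ℕ) : ℂ) * ((k - p - q - 1 : ℕ) : ℂ) = 0 := by
        rw [← Nat.cast_mul, hd, Nat.cast_zero]
      rw [this, mul_zero]
    · rw [A, if_neg h2, zero_mul]


lemma pd_pd_uSH (k : ℕ) (l : ℤ) (j : Fin 3) (x : E3) :
    pd j (pd j (fun y => ∑ i ∈ Finset.range (k + 1) ×ˢ Finset.range (k + 1),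
        A k l i.1 i.2 * mon i.1 i.2 (k - i.1 - i.2) y)) x =
      ∑ i ∈ Finset.range (k + 1) ×ˢ Finset.range (k + 1),
        A k l i.1 i.2 *
          ((i.1 : ℂ) * cw j * monPD j (i.1 - 1) i.2 (k - i.1 - i.2) x +
           (i.2 : ℂ) * cwb j * monPD j i.1 (i.2 - 1) (k - i.1 - i.2) x +
           ((k - i.1 - i.2 : ℕ) : ℂ) * cz j * monPD j i.1 i.2 (k - i.1 - i.2 - 1) x) :=
  pd_pd_sum (Finset.range (k + 1) ×ˢ Finset.range (k + 1)) (fun i => A k l i.1 i.2)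
    (fun i => i.1) (fun i => i.2) (fun i => k - i.1 - i.2) j x

end SHaux


/-- `u_{k,l}` is homogeneous of degree `k` and harmonic on `ℝ³`. -/
theorem uSH_homogeneous_harmonic (k : ℕ) (l : ℤ) (hl₁ : -(k : ℤ) ≤ l) (hl₂ : l ≤ (k : ℤ)) :
    (∀ (t : ℝ) (v : EuclideanSpace ℝ (Fin 3)), uSH k l (t • v) = (t : ℂ) ^ k * uSH k l v) ∧
    (∀ x : EuclideanSpace ℝ (Fin 3),
      pd 0 (pd 0 (uSH k l)) x + pd 1 (pd 1 (uSH k l)) x + pd 2 (pd 2 (uSH k l)) x = 0) := by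
  constructor
  · intro t v
    rw [SHaux.uSH_eq, SHaux.uSH_eq, Finset.mul_sum]
    refine Finset.sum_congr rfl fun i hi => ?_
    by_cases h : (i.1 : ℤ) - (i.2 : ℤ) = l ∧ i.1 + i.2 ≤ k
    · rw [SHaux.mon_smul, show i.1 + i.2 + (k - i.1 - i.2) = k from by omega]
      ring
    · have hA : SHaux.A k l i.1 i.2 = 0 := by rw [SHaux.A, if_neg h]
      rw [hA]; ring
  · intro x
    have hu : uSH k l = fun y => ∑ i ∈ Finset.range (k + 1) ×ˢ Finset.range (k + 1),
        SHaux.A k l i.1 i.2 * SHaux.mon i.1 i.2 (k - i.1 - i.2) y := funext (SHaux.uSH_eq k l)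
    rw [hu, SHaux.pd_pd_uSH, SHaux.pd_pd_uSH, SHaux.pd_pd_uSH,
      ← Finset.sum_add_distrib, ← Finset.sum_add_distrib]
    have hstep : ∀ i ∈ Finset.range (k + 1) ×ˢ Finset.range (k + 1),
        (SHaux.A k l i.1 i.2 *
          ((i.1 : ℂ) * SHaux.cw 0 * SHaux.monPD 0 (i.1 - 1) i.2 (k - i.1 - i.2) x +
           (i.2 : ℂ) * SHaux.cwb 0 * SHaux.monPD 0 i.1 (i.2 - 1) (k - i.1 - i.2) x +
           ((k - i.1 - i.2 : ℕ) : ℂ) * SHaux.cz 0 * SHaux.monPD 0 i.1 i.2 (k - i.1 - i.2 - 1) x) +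
         SHaux.A k l i.1 i.2 *
          ((i.1 : ℂ) * SHaux.cw 1 * SHaux.monPD 1 (i.1 - 1) i.2 (k - i.1 - i.2) x +
           (i.2 : ℂ) * SHaux.cwb 1 * SHaux.monPD 1 i.1 (i.2 - 1) (k - i.1 - i.2) x +
           ((k - i.1 - i.2 : ℕ) : ℂ) * SHaux.cz 1 * SHaux.monPD 1 i.1 i.2 (k - i.1 - i.2 - 1) x)) +
         SHaux.A k l i.1 i.2 *
          ((i.1 : ℂ) * SHaux.cw 2 * SHaux.monPD 2 (i.1 - 1) i.2 (k - i.1 - i.2) x +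
           (i.2 : ℂ) * SHaux.cwb 2 * SHaux.monPD 2 i.1 (i.2 - 1) (k - i.1 - i.2) x +
           ((k - i.1 - i.2 : ℕ) : ℂ) * SHaux.cz 2 * SHaux.monPD 2 i.1 i.2 (k - i.1 - i.2 - 1) x) =
        SHaux.A k l i.1 i.2 *
          (4 * (i.1 : ℂ) * (i.2 : ℂ) * SHaux.mon (i.1 - 1) (i.2 - 1) (k - i.1 - i.2) x) +
        SHaux.A k l i.1 i.2 *
          (((k - i.1 - i.2 : ℕ) : ℂ) * ((k - i.1 - i.2 - 1 : ℕ) : ℂ) *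
            SHaux.mon i.1 i.2 (k - i.1 - i.2 - 2) x) := by
      intro i _
      rw [← mul_add, ← mul_add, SHaux.lap_mon, mul_add]
    rw [Finset.sum_congr rfl hstep, Finset.sum_add_distrib, SHaux.shift,
      ← Finset.sum_add_distrib]
    refine Finset.sum_eq_zero fun i _ => ?_
    linear_combination (SHaux.coeff_cancel k l i.1 i.2) * SHaux.mon i.1 i.2 (k - i.1 - i.2 - 2) x
end
end
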